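/- arXiv:1604.08775 — 3 statements merged into one kernel-verified Lean document; each statement's English description precedes it below -/
import Mathlib

section
/- If G is a gate and v is a vertex of G, then v belongs to exactly two maximal cliques of G; moreover, if C_1 and C_2 are these two cliques, then C_1 ∩ C_2 = {v}. -/
/-- A maximal clique (a maximal complete vertex set) of a simple graph. -/
def IsMaxClique {V : Type} (G : SimpleGraph V) (s : Set V) : Prop :=
  G.IsClique s ∧ ∀ t : Set V, G.IsClique t → s ⊆ t → s = t

/-- The number of maximal cliques of a graph. -/
noncomputable def numMaxCliques {V : Type} (G : SimpleGraph V) : ℕ :=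
  {s : Set V | IsMaxClique G s}.ncard

/-- The graph obtained from `G` and a chordless path on `l` new vertices by joining the
first vertex of the path to every vertex of `A` and the last vertex to every vertex of `B`. -/
def joinPath {V : Type} (G : SimpleGraph V) (A B : Set V) (l : ℕ) :
    SimpleGraph (V ⊕ Fin l) where
  Adj x y :=
    match x, y with
    | Sum.inl a, Sum.inl b => G.Adj a b
    | Sum.inl a, Sum.inr i => (i.val = 0 ∧ a ∈ A) ∨ (i.val = l - 1 ∧ a ∈ B)
    | Sum.inr i, Sum.inl a => (i.val = 0 ∧ a ∈ A) ∨ (i.val = l - 1 ∧ a ∈ B)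
    | Sum.inr i, Sum.inr j => i.val + 1 = j.val ∨ j.val + 1 = i.val
  symm := by
    constructor
    rintro (a | i) (b | j) h <;> simp_all <;> tauto
  loopless := by
    constructor
    rintro (a | i) h
    · exact G.irrefl h
    · rcases h with h | h <;> omega

/-- Gates, defined recursively (up to isomorphism): chordless cycles `Cₙ`, `n ≥ 4`, are
gates, and joining a new chordless path to two disjoint maximal cliques of a gate
yields a gate. -/
inductive IsGate : {V : Type} → SimpleGraph V → Prop
  | cycle (n : ℕ) (hn : 4 ≤ n) : IsGate (SimpleGraph.cycleGraph n)
  | extend {V : Type} (G : SimpleGraph V) (C C' : Set V) (l : ℕ)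
      (hG : IsGate G) (hC : IsMaxClique G C) (hC' : IsMaxClique G C')
      (hdisj : Disjoint C C') (hl : 2 ≤ l) : IsGate (joinPath G C C' l)
  | iso {V W : Type} (G : SimpleGraph V) (H : SimpleGraph W)
      (hG : IsGate G) (e : G ≃g H) : IsGate H

/-- An EPT representation of `G`: a family of paths in a host tree such that two distinct
vertices are adjacent iff their paths share an edge of the tree. -/
structure EPTRep {V : Type} (G : SimpleGraph V) where
  VT : Type
  T : SimpleGraph VT
  tree : T.IsTree
  src : V → VT
  tgt : V → VT
  walk : (v : V) → T.Walk (src v) (tgt v)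
  isPath : ∀ v, (walk v).IsPath
  adj_iff : ∀ v w : V, v ≠ w →
    (G.Adj v w ↔ ∃ e : Sym2 VT, e ∈ (walk v).edges ∧ e ∈ (walk w).edges)

/-- The edge set of the path representing `v`. -/
def EPTRep.edges {V : Type} {G : SimpleGraph V} (R : EPTRep G) (v : V) :
    Set (Sym2 R.VT) := {e | e ∈ (R.walk v).edges}

/-- The representation is Helly: every nonempty pairwise edge-intersecting subfamily of
paths has a common edge. -/
def EPTRep.Helly {V : Type} {G : SimpleGraph V} (R : EPTRep G) : Prop :=
  ∀ S : Set V, S.Nonempty →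
    (∀ u ∈ S, ∀ v ∈ S, (R.edges u ∩ R.edges v).Nonempty) →
    (⋂ v ∈ S, R.edges v).Nonempty

/-- The host tree has maximum degree at most `h`. -/
def EPTRep.maxDegLE {V : Type} {G : SimpleGraph V} (R : EPTRep G) (h : ℕ) : Prop :=
  ∀ x : R.VT, (R.T.neighborSet x).ncard ≤ h

/-- The class `[h,2,2]`. -/
def InEPTClass (h : ℕ) {V : Type} (G : SimpleGraph V) : Prop :=
  ∃ R : EPTRep G, R.maxDegLE h

/-- Helly EPT graphs. -/
def IsHellyEPT {V : Type} (G : SimpleGraph V) : Prop :=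
  ∃ R : EPTRep G, R.Helly

/-- The class Helly `[h,2,2]`. -/
def InHellyClass (h : ℕ) {V : Type} (G : SimpleGraph V) : Prop :=
  ∃ R : EPTRep G, R.Helly ∧ R.maxDegLE h

/-- Three paths of the representation form a claw at some claw of the host tree. -/
def EPTRep.FormsClaw {V : Type} {G : SimpleGraph V} (R : EPTRep G) (a b c : V) : Prop :=
  ∃ q x y z : R.VT, R.T.Adj q x ∧ R.T.Adj q y ∧ R.T.Adj q z ∧
    x ≠ y ∧ y ≠ z ∧ x ≠ z ∧
    s(q, x) ∈ R.edges a ∧ s(q, y) ∈ R.edges a ∧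
    s(q, y) ∈ R.edges b ∧ s(q, z) ∈ R.edges b ∧
    s(q, x) ∈ R.edges c ∧ s(q, z) ∈ R.edges c

/-- A multipie of size `k` whose paths are those representing the vertices in `S`. -/
def IsMultipie {V : Type} {G : SimpleGraph V} (R : EPTRep G) (k : ℕ) (S : Set V) : Prop :=
  ∃ (q : R.VT) (qi : Fin k → R.VT), Function.Injective qi ∧
    (∀ i, R.T.Adj q (qi i)) ∧
    (∀ v ∈ S, {i : Fin k | qi i ∈ (R.walk v).support}.ncard = 2) ∧
    (∀ u ∈ S, ∀ v ∈ S, ∀ i j : Fin k, i ≠ j →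
      qi i ∈ (R.walk u).support → qi j ∈ (R.walk u).support →
      qi i ∈ (R.walk v).support → qi j ∈ (R.walk v).support → u = v) ∧
    (∀ i, 2 ≤ {v ∈ S | s(q, qi i) ∈ R.edges v}.ncard) ∧
    (∀ a ∈ S, ∀ b ∈ S, ∀ c ∈ S, ¬ R.FormsClaw a b c)

/-- The next index around a cycle. -/
def finNext {k : ℕ} (hk : 0 < k) (i : Fin k) : Fin k :=
  ⟨(i.val + 1) % k, Nat.mod_lt _ hk⟩

/-- `G` has a clique separator: a complete vertex set whose removal disconnects the graph. -/
def HasCliqueSep {V : Type} (G : SimpleGraph V) : Prop :=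
  ∃ C : Set V, G.IsClique C ∧ ¬ (G.induce Cᶜ).Preconnected

/-- An atom of `G`: a maximal vertex subset inducing a connected subgraph without clique
separators. -/
def IsAtomOf {V : Type} (G : SimpleGraph V) (A : Set V) : Prop :=
  (G.induce A).Connected ∧ ¬ HasCliqueSep (G.induce A) ∧
    ∀ B : Set V, A ⊆ B → (G.induce B).Connected → ¬ HasCliqueSep (G.induce B) → A = B

section AuxGeneral

open Sum Set

/-- The key property: the maximal cliques containing `v` form a pair `{X, Y}`
with `X ∩ Y = {v}`. -/
def MCQ {V : Type} (G : SimpleGraph V) (v : V) : Prop :=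
  ∃ X Y : Set V, X ≠ Y ∧ {s : Set V | IsMaxClique G s ∧ v ∈ s} = {X, Y} ∧ X ∩ Y = {v}

lemma sub_ne_helper {α : Type*} [AddCommGroup α] {a b c : α} (h : a - b = c) (hc : c ≠ 0) :
    a ≠ b := fun he => hc (h ▸ sub_eq_zero_of_eq he)

lemma maxClique_nonempty {V : Type} [Nonempty V] {G : SimpleGraph V} {s : Set V}
    (hs : IsMaxClique G s) : s.Nonempty := by
  rcases s.eq_empty_or_nonempty with h | h
  · exfalso
    obtain ⟨v⟩ := ‹Nonempty V›
    have h2 := hs.2 {v} (G.isClique_singleton v) (by simp [h])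
    rw [h] at h2
    exact (Set.singleton_ne_empty v) h2.symm
  · exact h

lemma gate_nonempty {V : Type} {G : SimpleGraph V} (hG : IsGate G) : Nonempty V := by
  induction hG with
  | cycle n hn => exact ⟨⟨0, by omega⟩⟩
  | extend G C C' l hG hC hC' hd hl ih => exact ⟨Sum.inr ⟨0, by omega⟩⟩
  | iso G H hG e ih => exact ⟨e (Classical.arbitrary _)⟩

lemma isClique_image {V W : Type} {G : SimpleGraph V} {H : SimpleGraph W} (e : G ≃g H)
    {s : Set V} (hs : G.IsClique s) : H.IsClique ((e : V → W) '' s) := by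
  rintro _ ⟨a, ha, rfl⟩ _ ⟨b, hb, rfl⟩ hne
  exact e.map_adj_iff.mpr (hs ha hb (fun h => hne (by rw [h])))

lemma image_symm_image' {V W : Type} {G : SimpleGraph V} {H : SimpleGraph W} (e : G ≃g H)
    (t : Set W) : (e : V → W) '' ((e.symm : W → V) '' t) = t := by
  rw [Set.image_image]
  simp

lemma symm_image_image' {V W : Type} {G : SimpleGraph V} {H : SimpleGraph W} (e : G ≃g H)
    (s : Set V) : (e.symm : W → V) '' ((e : V → W) '' s) = s := by
  rw [Set.image_image]
  simp

lemma isMaxClique_image {V W : Type} {G : SimpleGraph V} {H : SimpleGraph W} (e : G ≃g H)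
    {s : Set V} (hs : IsMaxClique G s) : IsMaxClique H ((e : V → W) '' s) := by
  refine ⟨isClique_image e hs.1, fun t ht hst => ?_⟩
  have h2 : s ⊆ (e.symm : W → V) '' t := by
    have := Set.image_mono (f := (e.symm : W → V)) hst
    rwa [symm_image_image'] at this
  have h3 := hs.2 _ (isClique_image e.symm ht) h2
  rw [h3, image_symm_image']

lemma mcq_iso {V W : Type} {G : SimpleGraph V} {H : SimpleGraph W} (e : G ≃g H)
    (ih : ∀ v, MCQ G v) (w : W) : MCQ H w := by
  obtain ⟨X, Y, hXY, hset, hint⟩ := ih (e.symm w)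
  have hXmem : IsMaxClique G X ∧ e.symm w ∈ X := by
    have : X ∈ {s : Set V | IsMaxClique G s ∧ e.symm w ∈ s} := by
      rw [hset]; exact Set.mem_insert _ _
    exact this
  have hYmem : IsMaxClique G Y ∧ e.symm w ∈ Y := by
    have : Y ∈ {s : Set V | IsMaxClique G s ∧ e.symm w ∈ s} := by
      rw [hset]; exact Set.mem_insert_iff.mpr (Or.inr rfl)
    exact this
  have hw : w = e (e.symm w) := (e.apply_symm_apply w).symm
  refine ⟨(e : V → W) '' X, (e : V → W) '' Y, ?_, ?_, ?_⟩
  · intro h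
    apply hXY
    have := congrArg (fun t => (e.symm : W → V) '' t) h
    simpa [symm_image_image'] using this
  · ext s
    simp only [Set.mem_setOf_eq, Set.mem_insert_iff, Set.mem_singleton_iff]
    constructor
    · rintro ⟨hs, hws⟩
      have hmem : (e.symm : W → V) '' s ∈ {s : Set V | IsMaxClique G s ∧ e.symm w ∈ s} :=
        ⟨isMaxClique_image e.symm hs, Set.mem_image_of_mem _ hws⟩
      rw [hset] at hmem
      rcases hmem with h | h
      · left
        rw [← image_symm_image' e s, h]
      · right
        rw [← image_symm_image' e s, Set.mem_singleton_iff.mp h]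
    · rintro (rfl | rfl)
      · exact ⟨isMaxClique_image e hXmem.1, hw ▸ Set.mem_image_of_mem _ hXmem.2⟩
      · exact ⟨isMaxClique_image e hYmem.1, hw ▸ Set.mem_image_of_mem _ hYmem.2⟩
  · rw [← Set.image_inter (show Function.Injective (e : V → W) from e.toEquiv.injective), hint]
    simp

end AuxGeneral
section AuxCycle

open Sum Set

open Fin.NatCast in
lemma mcq_cycle (n : ℕ) (hn : 4 ≤ n) : ∀ v : Fin n, MCQ (SimpleGraph.cycleGraph n) v := by
  obtain ⟨m, rfl⟩ : ∃ m, n = m + 4 := ⟨n - 4, by omega⟩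
  intro v
  have key : ∀ u w : Fin (m + 4), (SimpleGraph.cycleGraph (m + 4)).Adj u w ↔
      w = u - 1 ∨ w = u + 1 := by
    intro u w
    have h : (SimpleGraph.cycleGraph (m + 4)).Adj u w ↔ u - w = 1 ∨ w - u = 1 :=
      SimpleGraph.cycleGraph_adj (n := m + 2)
    rw [h]
    constructor
    · rintro (h1 | h1)
      · left; rw [← h1]; abel
      · right; rw [← h1]; abel
    · rintro (rfl | rfl)
      · left; abel
      · right; abel
  have hval : ∀ k : ℕ, k < m + 4 → (((k : ℕ) : Fin (m + 4)) : ℕ) = k :=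
    fun k hk => Fin.val_cast_of_lt hk
  have hne : ∀ k : ℕ, 0 < k → k < m + 4 → ((k : ℕ) : Fin (m + 4)) ≠ 0 := by
    intro k h0 hk h
    have h2 := congrArg Fin.val h
    rw [hval k hk] at h2
    simp at h2
    omega
  have h1 : (1 : Fin (m + 4)) ≠ 0 := by simp
  have h2 : (1 + 1 : Fin (m + 4)) ≠ 0 := by
    have := hne 2 (by omega) (by omega)
    rwa [show ((2 : ℕ) : Fin (m + 4)) = 1 + 1 from by norm_num] at this
  have h3 : (1 + 1 + 1 : Fin (m + 4)) ≠ 0 := by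
    have := hne 3 (by omega) (by omega)
    rwa [show ((3 : ℕ) : Fin (m + 4)) = 1 + 1 + 1 from by norm_num] at this
  have f1 : v + 1 ≠ v - 1 := sub_ne_helper (show v + 1 - (v - 1) = 1 + 1 from by abel) h2
  have f2 : v + 1 ≠ v := sub_ne_helper (show v + 1 - v = 1 from by abel) h1
  have f3 : v ≠ v - 1 := sub_ne_helper (show v - (v - 1) = 1 from by abel) h1
  have f4 : v + 1 ≠ v - 1 - 1 :=
    sub_ne_helper (show v + 1 - (v - 1 - 1) = 1 + 1 + 1 from by abel) h3
  have f5 : v + 1 + 1 ≠ v - 1 :=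
    sub_ne_helper (show v + 1 + 1 - (v - 1) = 1 + 1 + 1 from by abel) h3
  have sub_add : v - 1 + 1 = v := by abel
  have add_sub : v + 1 - 1 = v := by abel
  have maxX : IsMaxClique (SimpleGraph.cycleGraph (m + 4)) {v, v + 1} := by
    constructor
    · rw [SimpleGraph.isClique_pair]
      intro _
      exact (key v (v + 1)).mpr (Or.inr rfl)
    · intro t ht hsub
      apply Set.Subset.antisymm hsub
      intro u hu
      have hv : v ∈ t := hsub (Set.mem_insert _ _)
      have hv1 : v + 1 ∈ t := hsub (Set.mem_insert_iff.mpr (Or.inr rfl))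
      by_cases h : u = v
      · exact Set.mem_insert_iff.mpr (Or.inl h)
      by_cases h' : u = v + 1
      · exact Set.mem_insert_iff.mpr (Or.inr h')
      exfalso
      have a1 := (key v u).mp (ht hv hu (fun he => h he.symm))
      have a2 := (key (v + 1) u).mp (ht hv1 hu (fun he => h' he.symm))
      rw [add_sub] at a2
      rcases a1 with rfl | h1
      · rcases a2 with h2 | h2
        · exact f3 h2.symm
        · exact f5 h2.symm
      · exact h' h1
  have maxY : IsMaxClique (SimpleGraph.cycleGraph (m + 4)) {v - 1, v} := by
    constructor
    · rw [SimpleGraph.isClique_pair]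
      intro _
      exact (key (v - 1) v).mpr (Or.inr sub_add.symm)
    · intro t ht hsub
      apply Set.Subset.antisymm hsub
      intro u hu
      have hv : v ∈ t := hsub (Set.mem_insert_iff.mpr (Or.inr rfl))
      have hv1 : v - 1 ∈ t := hsub (Set.mem_insert _ _)
      by_cases h : u = v
      · exact Set.mem_insert_iff.mpr (Or.inr h)
      by_cases h' : u = v - 1
      · exact Set.mem_insert_iff.mpr (Or.inl h')
      exfalso
      have a1 := (key v u).mp (ht hv hu (fun he => h he.symm))
      have a2 := (key (v - 1) u).mp (ht hv1 hu (fun he => h' he.symm))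
      rw [sub_add] at a2
      rcases a1 with h1 | rfl
      · exact h' h1
      · rcases a2 with h2 | h2
        · exact f4 h2
        · exact f2 h2
  refine ⟨{v, v + 1}, {v - 1, v}, ?_, ?_, ?_⟩
  · intro h
    have : v + 1 ∈ ({v - 1, v} : Set (Fin (m + 4))) := by
      rw [← h]; exact Set.mem_insert_iff.mpr (Or.inr rfl)
    rcases this with h' | h'
    · exact f1 h'
    · exact f2 (Set.mem_singleton_iff.mp h')
  · ext s
    simp only [Set.mem_setOf_eq, Set.mem_insert_iff, Set.mem_singleton_iff]
    constructor
    · rintro ⟨hs, hvs⟩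
      by_cases hsv1 : v + 1 ∈ s
      · left
        apply hs.2 _ maxX.1
        intro u hu
        by_cases h : u = v
        · exact Set.mem_insert_iff.mpr (Or.inl h)
        have a1 := (key v u).mp (hs.1 hvs hu (fun he => h he.symm))
        rcases a1 with rfl | rfl
        · exfalso
          have hne' : v - 1 ≠ v + 1 := fun he => f1 he.symm
          exact (key (v - 1) (v + 1)).mp (hs.1 hu hsv1 hne') |>.elim
            (fun he => f4 he) (fun he => by rw [sub_add] at he; exact f2 he)
        · exact Set.mem_insert_iff.mpr (Or.inr rfl)
      · right
        apply hs.2 _ maxY.1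
        intro u hu
        by_cases h : u = v
        · exact Set.mem_insert_iff.mpr (Or.inr h)
        have a1 := (key v u).mp (hs.1 hvs hu (fun he => h he.symm))
        rcases a1 with rfl | rfl
        · exact Set.mem_insert _ _
        · exact absurd hu hsv1
    · rintro (rfl | rfl)
      · exact ⟨maxX, Set.mem_insert _ _⟩
      · exact ⟨maxY, Set.mem_insert_iff.mpr (Or.inr rfl)⟩
  · ext x
    simp only [Set.mem_inter_iff, Set.mem_insert_iff, Set.mem_singleton_iff]
    constructor
    · rintro ⟨h | h, hy⟩
      · exact h
      · subst h
        rcases hy with h' | h'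
        · exact absurd h' f1
        · exact absurd h' f2
    · rintro rfl
      exact ⟨Or.inl rfl, Or.inr rfl⟩

end AuxCycle
section AuxJoin

open Sum Set

variable {V : Type} {G : SimpleGraph V} {A B : Set V} {l : ℕ}

lemma jp_adj_ll {a b : V} : (joinPath G A B l).Adj (inl a) (inl b) ↔ G.Adj a b := Iff.rfl

lemma jp_adj_lr {a : V} {i : Fin l} :
    (joinPath G A B l).Adj (inl a) (inr i) ↔ (i.val = 0 ∧ a ∈ A) ∨ (i.val = l - 1 ∧ a ∈ B) :=
  Iff.rfl

lemma jp_adj_rr {i j : Fin l} :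
    (joinPath G A B l).Adj (inr i) (inr j) ↔ i.val + 1 = j.val ∨ j.val + 1 = i.val := Iff.rfl

lemma jp_no_two (hd : Disjoint A B) {a : V} {i j : Fin l}
    (hi : (joinPath G A B l).Adj (inl a) (inr i)) (hj : (joinPath G A B l).Adj (inl a) (inr j))
    (hij : i ≠ j) : False := by
  rw [jp_adj_lr] at hi hj
  have hij' : i.val ≠ j.val := fun h => hij (Fin.ext h)
  rcases hi with ⟨h1, ha⟩ | ⟨h1, ha⟩ <;> rcases hj with ⟨h2, hb⟩ | ⟨h2, hb⟩
  · omega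
  · exact Set.disjoint_left.mp hd ha hb
  · exact Set.disjoint_left.mp hd hb ha
  · omega

lemma jp_clique_two_inr (hd : Disjoint A B) {s : Set (V ⊕ Fin l)}
    (hs : (joinPath G A B l).IsClique s) {i j : Fin l}
    (hi : inr i ∈ s) (hj : inr j ∈ s) (hij : i ≠ j) :
    s ⊆ {inr i, inr j} := by
  intro x hx
  rcases x with a | k
  · exfalso
    have h1 := hs hx hi (by simp)
    have h2 := hs hx hj (by simp)
    exact jp_no_two hd h1 h2 hij
  · by_cases hki : k = i
    · exact Set.mem_insert_iff.mpr (Or.inl (by rw [hki]))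
    by_cases hkj : k = j
    · exact Set.mem_insert_iff.mpr (Or.inr (by rw [hkj]; rfl))
    exfalso
    have h1 := (jp_adj_rr).mp (hs hx hi (fun h => hki (Sum.inr_injective h)))
    have h2 := (jp_adj_rr).mp (hs hx hj (fun h => hkj (Sum.inr_injective h)))
    have h3 := (jp_adj_rr).mp (hs hi hj (fun h => hij (Sum.inr_injective h)))
    have e1 : k.val ≠ i.val := fun h => hki (Fin.ext h)
    have e2 : k.val ≠ j.val := fun h => hkj (Fin.ext h)
    omega

lemma jp_max_inl (hl : 2 ≤ l) (hA : IsMaxClique G A) (hB : IsMaxClique G B)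
    {D : Set V} (hD : IsMaxClique G D) (hDne : D.Nonempty)
    (hDA : D ≠ A) (hDB : D ≠ B) : IsMaxClique (joinPath G A B l) (inl '' D) := by
  constructor
  · rintro _ ⟨a, ha, rfl⟩ _ ⟨b, hb, rfl⟩ hne
    exact hD.1 ha hb (fun h => hne (by rw [h]))
  · intro t ht hsub
    apply Set.Subset.antisymm hsub
    intro x hx
    rcases x with b | j
    · have hDb : G.IsClique (insert b D) := by
        intro x hx' y hy' hxy
        rcases hx' with rfl | hx'
        · rcases hy' with rfl | hy'
          · exact absurd rfl hxy
          · exact jp_adj_ll.mp (ht hx (hsub (Set.mem_image_of_mem _ hy'))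
              (fun h => hxy (Sum.inl_injective h)))
        · rcases hy' with rfl | hy'
          · exact jp_adj_ll.mp (ht (hsub (Set.mem_image_of_mem _ hx')) hx
              (fun h => hxy (Sum.inl_injective h)))
          · exact hD.1 hx' hy' hxy
      have heq := hD.2 _ hDb (Set.subset_insert _ _)
      have : b ∈ D := heq ▸ Set.mem_insert _ _
      exact Set.mem_image_of_mem _ this
    · exfalso
      have hall : ∀ a ∈ D, (j.val = 0 ∧ a ∈ A) ∨ (j.val = l - 1 ∧ a ∈ B) := fun a ha =>
        jp_adj_lr.mp (ht (hsub (Set.mem_image_of_mem _ ha)) hx (by simp))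
      by_cases hj0 : j.val = 0
      · have hjl : j.val ≠ l - 1 := by omega
        have hsubA : D ⊆ A := fun a ha =>
          ((hall a ha).resolve_right (fun h => hjl h.1)).2
        exact hDA (hD.2 A hA.1 hsubA)
      · by_cases hjl : j.val = l - 1
        · have hsubB : D ⊆ B := fun a ha =>
            ((hall a ha).resolve_left (fun h => hj0 h.1)).2
          exact hDB (hD.2 B hB.1 hsubB)
        · obtain ⟨a, ha⟩ := hDne
          rcases hall a ha with h | h
          · exact hj0 h.1
          · exact hjl h.1

lemma jp_max_A (hl : 2 ≤ l) (hA : IsMaxClique G A) (hAne : A.Nonempty) (hd : Disjoint A B) :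
    IsMaxClique (joinPath G A B l) (inl '' A ∪ {inr ⟨0, by omega⟩}) := by
  constructor
  · rintro x hx y hy hne
    rcases hx with ⟨a, ha, rfl⟩ | hx
    · rcases hy with ⟨b, hb, rfl⟩ | hy
      · exact hA.1 ha hb (fun h => hne (by rw [h]))
      · rw [Set.mem_singleton_iff] at hy; subst hy
        exact jp_adj_lr.mpr (Or.inl ⟨rfl, ha⟩)
    · rw [Set.mem_singleton_iff] at hx; subst hx
      rcases hy with ⟨b, hb, rfl⟩ | hy
      · exact ((joinPath G A B l).adj_symm (jp_adj_lr.mpr (Or.inl ⟨rfl, hb⟩)))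
      · rw [Set.mem_singleton_iff] at hy; subst hy
        exact absurd rfl hne
  · intro t ht hsub
    apply Set.Subset.antisymm hsub
    intro x hx
    have hz : (inr ⟨0, by omega⟩ : V ⊕ Fin l) ∈ t := hsub (Or.inr rfl)
    rcases x with b | j
    · have := jp_adj_lr.mp (ht hx hz (by simp))
      rcases this with ⟨_, hb⟩ | ⟨h0, _⟩
      · exact Or.inl (Set.mem_image_of_mem _ hb)
      · exfalso; simp only at h0; omega
    · by_cases hj : j = ⟨0, by omega⟩
      · exact Or.inr (by rw [hj]; rfl)
      · exfalso
        obtain ⟨a, ha⟩ := hAne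
        have hat : inl a ∈ t := hsub (Or.inl (Set.mem_image_of_mem _ ha))
        have hadj1 := ht hat hx (by simp)
        have hadj2 : (joinPath G A B l).Adj (inl a) (inr ⟨0, by omega⟩) :=
          jp_adj_lr.mpr (Or.inl ⟨rfl, ha⟩)
        exact jp_no_two hd hadj2 hadj1 (fun h => hj h.symm)

lemma jp_max_B (hl : 2 ≤ l) (hB : IsMaxClique G B) (hBne : B.Nonempty) (hd : Disjoint A B) :
    IsMaxClique (joinPath G A B l) (inl '' B ∪ {inr ⟨l - 1, by omega⟩}) := by
  constructor
  · rintro x hx y hy hne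
    rcases hx with ⟨a, ha, rfl⟩ | hx
    · rcases hy with ⟨b, hb, rfl⟩ | hy
      · exact hB.1 ha hb (fun h => hne (by rw [h]))
      · rw [Set.mem_singleton_iff] at hy; subst hy
        exact jp_adj_lr.mpr (Or.inr ⟨rfl, ha⟩)
    · rw [Set.mem_singleton_iff] at hx; subst hx
      rcases hy with ⟨b, hb, rfl⟩ | hy
      · exact ((joinPath G A B l).adj_symm (jp_adj_lr.mpr (Or.inr ⟨rfl, hb⟩)))
      · rw [Set.mem_singleton_iff] at hy; subst hy
        exact absurd rfl hne
  · intro t ht hsub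
    apply Set.Subset.antisymm hsub
    intro x hx
    have hz : (inr ⟨l - 1, by omega⟩ : V ⊕ Fin l) ∈ t := hsub (Or.inr rfl)
    rcases x with b | j
    · have := jp_adj_lr.mp (ht hx hz (by simp))
      rcases this with ⟨h0, _⟩ | ⟨_, hb⟩
      · exfalso; simp only at h0; omega
      · exact Or.inl (Set.mem_image_of_mem _ hb)
    · by_cases hj : j = ⟨l - 1, by omega⟩
      · exact Or.inr (by rw [hj]; rfl)
      · exfalso
        obtain ⟨a, ha⟩ := hBne
        have hat : inl a ∈ t := hsub (Or.inl (Set.mem_image_of_mem _ ha))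
        have hadj1 := ht hat hx (by simp)
        have hadj2 : (joinPath G A B l).Adj (inl a) (inr ⟨l - 1, by omega⟩) :=
          jp_adj_lr.mpr (Or.inr ⟨rfl, ha⟩)
        exact jp_no_two hd hadj2 hadj1 (fun h => hj h.symm)

lemma jp_max_edge (hd : Disjoint A B) (hl : 2 ≤ l) {i j : Fin l} (hij : i.val + 1 = j.val) :
    IsMaxClique (joinPath G A B l) {inr i, inr j} := by
  have hijne : i ≠ j := by intro h; rw [h] at hij; omega
  constructor
  · rw [SimpleGraph.isClique_pair]
    intro _
    exact jp_adj_rr.mpr (Or.inl hij)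
  · intro t ht hsub
    apply Set.Subset.antisymm hsub
    intro x hx
    have hi : (inr i : V ⊕ Fin l) ∈ t := hsub (Set.mem_insert _ _)
    have hj : (inr j : V ⊕ Fin l) ∈ t := hsub (Set.mem_insert_iff.mpr (Or.inr rfl))
    rcases x with a | k
    · exact absurd (jp_no_two hd (ht hx hi (by simp)) (ht hx hj (by simp)) hijne) id
    · by_cases hki : k = i
      · exact Set.mem_insert_iff.mpr (Or.inl (by rw [hki]))
      by_cases hkj : k = j
      · exact Set.mem_insert_iff.mpr (Or.inr (by rw [hkj]; rfl))
      exfalso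
      have h1 := jp_adj_rr.mp (ht hx hi (fun h => hki (Sum.inr_injective h)))
      have h2 := jp_adj_rr.mp (ht hx hj (fun h => hkj (Sum.inr_injective h)))
      have e1 : k.val ≠ i.val := fun h => hki (Fin.ext h)
      have e2 : k.val ≠ j.val := fun h => hkj (Fin.ext h)
      omega

end AuxJoin
section AuxClassify

open Sum Set

variable {V : Type} {G : SimpleGraph V} {A B : Set V} {l : ℕ}

lemma jp_classify [Nonempty V] (hA : IsMaxClique G A) (hB : IsMaxClique G B)
    (hd : Disjoint A B) (hl : 2 ≤ l)
    {s : Set (V ⊕ Fin l)} (hs : IsMaxClique (joinPath G A B l) s) :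
    (∃ D, IsMaxClique G D ∧ D ≠ A ∧ D ≠ B ∧ s = inl '' D) ∨
    s = inl '' A ∪ {inr ⟨0, by omega⟩} ∨
    s = inl '' B ∪ {inr ⟨l - 1, by omega⟩} ∨
    (∃ i j : Fin l, i.val + 1 = j.val ∧ s = {inr i, inr j}) := by
  by_cases h2 : ∃ i j : Fin l, i ≠ j ∧ inr i ∈ s ∧ inr j ∈ s
  · obtain ⟨i, j, hij, hi, hj⟩ := h2
    right; right; right
    have hsub := jp_clique_two_inr hd hs.1 hi hj hij
    have hadj := jp_adj_rr.mp (hs.1 hi hj (fun h => hij (Sum.inr_injective h)))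
    have hseq : s = {inr i, inr j} := by
      apply Set.Subset.antisymm hsub
      intro x hx
      rcases hx with rfl | hx
      · exact hi
      · rw [Set.mem_singleton_iff] at hx; subst hx; exact hj
    rcases hadj with h | h
    · exact ⟨i, j, h, hseq⟩
    · exact ⟨j, i, h, by rw [hseq, Set.pair_comm]⟩
  · push_neg at h2
    by_cases hone : ∃ i : Fin l, inr i ∈ s
    · obtain ⟨i, hi⟩ := hone
      have honly : ∀ k : Fin l, inr k ∈ s → k = i := by
        intro k hk
        by_contra hk'
        exact h2 k i hk' hk hi
      by_cases hi0 : i.val = 0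
      · right; left
        apply hs.2 _ (jp_max_A hl hA (maxClique_nonempty hA) hd).1
        intro x hx
        rcases x with a | k
        · have := jp_adj_lr.mp (hs.1 hx hi (by simp))
          rcases this with ⟨_, ha⟩ | ⟨hll, _⟩
          · exact Or.inl (Set.mem_image_of_mem _ ha)
          · exfalso; omega
        · have hk := honly k hx
          refine Or.inr ?_
          rw [hk]
          have : i = (⟨0, by omega⟩ : Fin l) := Fin.ext hi0
          rw [this]; rfl
      · by_cases hil : i.val = l - 1
        · right; right; left
          apply hs.2 _ (jp_max_B hl hB (maxClique_nonempty hB) hd).1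
          intro x hx
          rcases x with a | k
          · have := jp_adj_lr.mp (hs.1 hx hi (by simp))
            rcases this with ⟨hll, _⟩ | ⟨_, ha⟩
            · exfalso; omega
            · exact Or.inl (Set.mem_image_of_mem _ ha)
          · have hk := honly k hx
            refine Or.inr ?_
            rw [hk]
            have : i = (⟨l - 1, by omega⟩ : Fin l) := Fin.ext hil
            rw [this]; rfl
        · exfalso
          have hipos : 0 < i.val := by omega
          have hlt : i.val - 1 < l := by omega
          have hsubmk : s ⊆ {inr (⟨i.val - 1, hlt⟩ : Fin l), inr i} := by
            intro x hx
            rcases x with a | k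
            · exfalso
              have := jp_adj_lr.mp (hs.1 hx hi (by simp))
              rcases this with ⟨h, _⟩ | ⟨h, _⟩
              · exact hi0 h
              · exact hil h
            · exact Set.mem_insert_iff.mpr (Or.inr (by rw [honly k hx]; rfl))
          have hmc := (jp_max_edge (G := G) hd hl
            (show (⟨i.val - 1, hlt⟩ : Fin l).val + 1 = i.val by simp; omega)).1
          have heq := hs.2 _ hmc hsubmk
          have hmem : inr (⟨i.val - 1, hlt⟩ : Fin l) ∈ s := by
            rw [heq]; exact Set.mem_insert _ _
          have := honly _ hmem
          have := congrArg Fin.val this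
          simp at this
          omega
    · left
      push_neg at hone
      have hran : s ⊆ Set.range inl := by
        intro x hx
        rcases x with a | k
        · exact ⟨a, rfl⟩
        · exact absurd hx (hone k)
      have himg : inl '' (inl ⁻¹' s) = s := Set.image_preimage_eq_of_subset hran
      refine ⟨inl ⁻¹' s, ⟨?_, ?_⟩, ?_, ?_, himg.symm⟩
      · intro a ha b hb hab
        exact jp_adj_ll.mp (hs.1 ha hb (fun h => hab (Sum.inl_injective h)))
      · intro t ht hsub
        have htcl : (joinPath G A B l).IsClique (inl '' t) := by
          rintro _ ⟨a, ha, rfl⟩ _ ⟨b, hb, rfl⟩ hne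
          exact ht ha hb (fun h => hne (by rw [h]))
        have hs2 := hs.2 (inl '' t) htcl (by rw [← himg]; exact Set.image_mono hsub)
        rw [hs2, Set.preimage_image_eq _ Sum.inl_injective]
      · intro hDA
        have hseq : s = inl '' A := by rw [← himg, hDA]
        have := hs.2 _ (jp_max_A hl hA (maxClique_nonempty hA) hd).1
          (by rw [hseq]; exact Set.subset_union_left)
        have hmem : (inr ⟨0, by omega⟩ : V ⊕ Fin l) ∈ s := by
          rw [this]; exact Or.inr rfl
        exact hone _ hmem
      · intro hDB
        have hseq : s = inl '' B := by rw [← himg, hDB]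
        have := hs.2 _ (jp_max_B hl hB (maxClique_nonempty hB) hd).1
          (by rw [hseq]; exact Set.subset_union_left)
        have hmem : (inr ⟨l - 1, by omega⟩ : V ⊕ Fin l) ∈ s := by
          rw [this]; exact Or.inr rfl
        exact hone _ hmem

end AuxClassify
section AuxPhi

open Sum Set

open Classical in
/-- The map sending a maximal clique of `G` to the corresponding maximal clique
of `joinPath G A B l`. -/
noncomputable def phi {V : Type} (A B : Set V) (l : ℕ) (hl : 2 ≤ l) (D : Set V) :
    Set (V ⊕ Fin l) :=
  if D = A then Sum.inl '' A ∪ {Sum.inr ⟨0, by omega⟩}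
  else if D = B then Sum.inl '' B ∪ {Sum.inr ⟨l - 1, by omega⟩}
  else Sum.inl '' D

variable {V : Type} {G : SimpleGraph V} {A B : Set V} {l : ℕ}

lemma phi_inl_mem (hl : 2 ≤ l) {D : Set V} {b : V} :
    inl b ∈ phi A B l hl D ↔ b ∈ D := by
  unfold phi
  split_ifs with hA hB
  · subst hA; simp
  · subst hB; simp
  · simp

lemma phi_inr_mem (hl : 2 ≤ l) {D : Set V} {k : Fin l} (h : inr k ∈ phi A B l hl D) :
    (D = A ∧ k.val = 0) ∨ (D = B ∧ k.val = l - 1) := by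
  unfold phi at h
  split_ifs at h with hA hB
  · left
    refine ⟨hA, ?_⟩
    rcases h with ⟨a, _, ha⟩ | h
    · exact absurd ha (by simp)
    · rw [Set.mem_singleton_iff] at h
      have := congrArg Fin.val (Sum.inr_injective h)
      simpa using this
  · right
    refine ⟨hB, ?_⟩
    rcases h with ⟨a, _, ha⟩ | h
    · exact absurd ha (by simp)
    · rw [Set.mem_singleton_iff] at h
      have := congrArg Fin.val (Sum.inr_injective h)
      simpa using this
  · rcases h with ⟨a, _, ha⟩
    exact absurd ha (by simp)

lemma phi_inj (hl : 2 ≤ l) : Function.Injective (phi A B l hl) := by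
  intro D E h
  ext b
  rw [← phi_inl_mem (A := A) (B := B) hl, h, phi_inl_mem hl]

lemma phi_maxClique [Nonempty V] (hl : 2 ≤ l) (hA : IsMaxClique G A) (hB : IsMaxClique G B)
    (hd : Disjoint A B) {D : Set V} (hD : IsMaxClique G D) :
    IsMaxClique (joinPath G A B l) (phi A B l hl D) := by
  unfold phi
  split_ifs with h1 h2
  · subst h1; exact jp_max_A hl hA (maxClique_nonempty hA) hd
  · subst h2; exact jp_max_B hl hB (maxClique_nonempty hB) hd
  · exact jp_max_inl hl hA hB hD (maxClique_nonempty hD) h1 h2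

lemma jp_inv [Nonempty V] (hl : 2 ≤ l) (hA : IsMaxClique G A) (hB : IsMaxClique G B)
    (hd : Disjoint A B) {s : Set (V ⊕ Fin l)} {a : V}
    (hs : IsMaxClique (joinPath G A B l) s) (has : inl a ∈ s) :
    ∃ D, IsMaxClique G D ∧ a ∈ D ∧ s = phi A B l hl D := by
  have hBA : B ≠ A := by
    intro h
    rw [h] at hd
    obtain ⟨x, hx⟩ := maxClique_nonempty hA
    exact Set.disjoint_left.mp hd hx hx
  rcases jp_classify hA hB hd hl hs with ⟨D, hD, hDA, hDB, rfl⟩ | rfl | rfl | ⟨i, j, hij, rfl⟩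
  · obtain ⟨a', ha', he⟩ := has
    have : a' = a := Sum.inl_injective he
    subst this
    exact ⟨D, hD, ha', by unfold phi; rw [if_neg hDA, if_neg hDB]⟩
  · have haA : a ∈ A := by
      rcases has with ⟨a', ha', he⟩ | h
      · rwa [← Sum.inl_injective he]
      · exact absurd (Set.mem_singleton_iff.mp h) (by simp)
    exact ⟨A, hA, haA, by unfold phi; rw [if_pos rfl]⟩
  · have haB : a ∈ B := by
      rcases has with ⟨a', ha', he⟩ | h
      · rwa [← Sum.inl_injective he]
      · exact absurd (Set.mem_singleton_iff.mp h) (by simp)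
    exact ⟨B, hB, haB, by unfold phi; rw [if_neg hBA, if_pos rfl]⟩
  · exfalso
    rcases has with h | h
    · exact absurd h (by simp)
    · exact absurd (Set.mem_singleton_iff.mp h) (by simp)

lemma mcq_extend_inl [Nonempty V] (hl : 2 ≤ l) (hA : IsMaxClique G A) (hB : IsMaxClique G B)
    (hd : Disjoint A B) {a : V} (ih : MCQ G a) : MCQ (joinPath G A B l) (inl a) := by
  obtain ⟨D₁, D₂, h12, hset, hint⟩ := ih
  have hD₁ : IsMaxClique G D₁ ∧ a ∈ D₁ := by
    have : D₁ ∈ {s : Set V | IsMaxClique G s ∧ a ∈ s} := by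
      rw [hset]; exact Set.mem_insert _ _
    exact this
  have hD₂ : IsMaxClique G D₂ ∧ a ∈ D₂ := by
    have : D₂ ∈ {s : Set V | IsMaxClique G s ∧ a ∈ s} := by
      rw [hset]; exact Set.mem_insert_iff.mpr (Or.inr rfl)
    exact this
  refine ⟨phi A B l hl D₁, phi A B l hl D₂, fun h => h12 (phi_inj hl h), ?_, ?_⟩
  · ext s
    simp only [Set.mem_setOf_eq, Set.mem_insert_iff, Set.mem_singleton_iff]
    constructor
    · rintro ⟨hs, has⟩
      obtain ⟨D, hD, haD, rfl⟩ := jp_inv hl hA hB hd hs has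
      have hmem : D ∈ ({D₁, D₂} : Set (Set V)) := by
        rw [← hset]; exact ⟨hD, haD⟩
      rcases hmem with rfl | hmem
      · exact Or.inl rfl
      · rw [Set.mem_singleton_iff] at hmem; subst hmem
        exact Or.inr rfl
    · rintro (rfl | rfl)
      · exact ⟨phi_maxClique hl hA hB hd hD₁.1, (phi_inl_mem hl).mpr hD₁.2⟩
      · exact ⟨phi_maxClique hl hA hB hd hD₂.1, (phi_inl_mem hl).mpr hD₂.2⟩
  · ext x
    constructor
    · rintro ⟨hx1, hx2⟩
      rcases x with b | k
      · have hb : b ∈ D₁ ∩ D₂ := ⟨(phi_inl_mem hl).mp hx1, (phi_inl_mem hl).mp hx2⟩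
        rw [hint, Set.mem_singleton_iff] at hb
        subst hb; rfl
      · exfalso
        rcases phi_inr_mem hl hx1 with ⟨e1, k1⟩ | ⟨e1, k1⟩ <;>
          rcases phi_inr_mem hl hx2 with ⟨e2, k2⟩ | ⟨e2, k2⟩
        · exact h12 (e1.trans e2.symm)
        · omega
        · omega
        · exact h12 (e1.trans e2.symm)
    · intro hx
      rw [Set.mem_singleton_iff] at hx; subst hx
      exact ⟨(phi_inl_mem hl).mpr hD₁.2, (phi_inl_mem hl).mpr hD₂.2⟩

end AuxPhi
section AuxFinal

open Sum Set

variable {V : Type} {G : SimpleGraph V} {A B : Set V} {l : ℕ}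

lemma mcq_extend_inr [Nonempty V] (hl : 2 ≤ l) (hA : IsMaxClique G A) (hB : IsMaxClique G B)
    (hd : Disjoint A B) (i : Fin l) : MCQ (joinPath G A B l) (inr i) := by
  have hl0 : 0 < l := lt_of_lt_of_le zero_lt_two hl
  have hp0 : (0 : ℕ) < l := hl0
  have hp1 : l - 1 < l := Nat.sub_lt hl0 Nat.one_pos
  have hp2 : l - 2 < l := Nat.sub_lt hl0 zero_lt_two
  have hpo : 1 < l := lt_of_lt_of_le Nat.one_lt_two hl
  by_cases hi0 : i.val = 0
  · have hieq : i = (⟨0, hp0⟩ : Fin l) := Fin.ext hi0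
    refine ⟨inl '' A ∪ {inr ⟨0, hp0⟩}, {inr ⟨0, hp0⟩, inr ⟨1, hpo⟩}, ?_, ?_, ?_⟩
    · intro h
      have hm : (inr ⟨1, hpo⟩ : V ⊕ Fin l) ∈ inl '' A ∪ {inr ⟨0, hp0⟩} := by
        rw [h]; exact Set.mem_insert_iff.mpr (Or.inr rfl)
      rcases hm with ⟨a, _, ha⟩ | hm
      · exact absurd ha (by simp)
      · rw [Set.mem_singleton_iff] at hm
        have := congrArg Fin.val (Sum.inr_injective hm)
        simp at this
    · ext s
      simp only [Set.mem_setOf_eq, Set.mem_insert_iff, Set.mem_singleton_iff]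
      constructor
      · rintro ⟨hs, his⟩
        rcases jp_classify hA hB hd hl hs with ⟨D, hD, hDA, hDB, rfl⟩ | rfl | rfl |
          ⟨p, q, hpq, rfl⟩
        · exfalso
          obtain ⟨a, _, ha⟩ := his
          exact absurd ha (by simp)
        · exact Or.inl rfl
        · exfalso
          rcases his with ⟨a, _, ha⟩ | hm
          · exact absurd ha (by simp)
          · rw [Set.mem_singleton_iff] at hm
            have := congrArg Fin.val (Sum.inr_injective hm)
            simp at this
            try omega
        · right
          rcases his with hm | hm
          · have hp : p = (⟨0, hp0⟩ : Fin l) := (Sum.inr_injective hm).symm.trans hieq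
            have hq : q = (⟨1, hpo⟩ : Fin l) := by
              apply Fin.ext
              show q.val = 1
              have hpv : p.val = 0 := congrArg Fin.val hp
              omega
            rw [hp, hq]
          · exfalso
            rw [Set.mem_singleton_iff] at hm
            have hq : q = i := (Sum.inr_injective hm).symm
            rw [hq] at hpq
            omega
      · rintro (rfl | rfl)
        · exact ⟨jp_max_A hl hA (maxClique_nonempty hA) hd,
            by rw [hieq]; exact Or.inr rfl⟩
        · refine ⟨jp_max_edge hd hl (show (0 : ℕ) + 1 = 1 from rfl),
            by rw [hieq]; exact Or.inl rfl⟩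
    · ext x
      constructor
      · rintro ⟨hx1, hx2⟩
        rcases hx2 with hm | hm
        · rw [hm, hieq]; rfl
        · exfalso
          rw [Set.mem_singleton_iff] at hm
          subst hm
          rcases hx1 with ⟨a, _, ha⟩ | hm
          · exact absurd ha (by simp)
          · rw [Set.mem_singleton_iff] at hm
            have := congrArg Fin.val (Sum.inr_injective hm)
            simp at this
      · intro hx
        rw [Set.mem_singleton_iff] at hx
        subst hx
        rw [hieq]
        exact ⟨Or.inr rfl, Set.mem_insert _ _⟩
  · by_cases hil : i.val = l - 1
    · have hieq : i = (⟨l - 1, hp1⟩ : Fin l) := Fin.ext hil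
      refine ⟨inl '' B ∪ {inr ⟨l - 1, hp1⟩},
        {inr ⟨l - 2, hp2⟩, inr ⟨l - 1, hp1⟩}, ?_, ?_, ?_⟩
      · intro h
        have hm : (inr ⟨l - 2, hp2⟩ : V ⊕ Fin l) ∈ inl '' B ∪ {inr ⟨l - 1, hp1⟩} := by
          rw [h]; exact Set.mem_insert _ _
        rcases hm with ⟨a, _, ha⟩ | hm
        · exact absurd ha (by simp)
        · rw [Set.mem_singleton_iff] at hm
          have := congrArg Fin.val (Sum.inr_injective hm)
          simp at this
          try omega
      · ext s
        simp only [Set.mem_setOf_eq, Set.mem_insert_iff, Set.mem_singleton_iff]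
        constructor
        · rintro ⟨hs, his⟩
          rcases jp_classify hA hB hd hl hs with ⟨D, hD, hDA, hDB, rfl⟩ | rfl | rfl |
            ⟨p, q, hpq, rfl⟩
          · exfalso
            obtain ⟨a, _, ha⟩ := his
            exact absurd ha (by simp)
          · exfalso
            rcases his with ⟨a, _, ha⟩ | hm
            · exact absurd ha (by simp)
            · rw [Set.mem_singleton_iff] at hm
              have := congrArg Fin.val (Sum.inr_injective hm)
              simp at this
              try omega
          · exact Or.inl rfl
          · right
            rcases his with hm | hm
            · exfalso
              have hp : p = i := (Sum.inr_injective hm).symm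
              rw [hp] at hpq
              have := q.isLt
              omega
            · rw [Set.mem_singleton_iff] at hm
              have hq : q = (⟨l - 1, hp1⟩ : Fin l) := (Sum.inr_injective hm).symm.trans hieq
              have hp : p = (⟨l - 2, hp2⟩ : Fin l) := by
                apply Fin.ext
                show p.val = l - 2
                have hqv : q.val = (l : ℕ) - 1 := congrArg Fin.val hq
                omega
              rw [hp, hq]
        · rintro (rfl | rfl)
          · exact ⟨jp_max_B hl hB (maxClique_nonempty hB) hd,
              by rw [hieq]; exact Or.inr rfl⟩
          · refine ⟨jp_max_edge hd hl (show (l : ℕ) - 2 + 1 = l - 1 from by omega),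
              by rw [hieq]; exact Or.inr rfl⟩
      · ext x
        constructor
        · rintro ⟨hx1, hx2⟩
          rcases hx2 with hm | hm
          · exfalso
            subst hm
            rcases hx1 with ⟨a, _, ha⟩ | hm
            · exact absurd ha (by simp)
            · rw [Set.mem_singleton_iff] at hm
              have := congrArg Fin.val (Sum.inr_injective hm)
              simp at this
              try omega
          · rw [Set.mem_singleton_iff] at hm
            rw [hm, hieq]; rfl
        · intro hx
          rw [Set.mem_singleton_iff] at hx
          subst hx
          rw [hieq]
          exact ⟨Or.inr rfl, Set.mem_insert_iff.mpr (Or.inr rfl)⟩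
    · have hvlt : i.val < l := i.isLt
      have h1 : i.val - 1 < l := by omega
      have h2 : i.val + 1 < l := by omega
      refine ⟨{inr ⟨i.val - 1, h1⟩, inr i}, {inr i, inr ⟨i.val + 1, h2⟩}, ?_, ?_, ?_⟩
      · intro h
        have hm : (inr ⟨i.val - 1, h1⟩ : V ⊕ Fin l) ∈
            ({inr i, inr ⟨i.val + 1, h2⟩} : Set (V ⊕ Fin l)) := by
          rw [← h]; exact Set.mem_insert _ _
        rcases hm with hm | hm
        · have := congrArg Fin.val (Sum.inr_injective hm)
          simp at this
          try omega
        · rw [Set.mem_singleton_iff] at hm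
          have := congrArg Fin.val (Sum.inr_injective hm)
          simp at this
          try omega
      · ext s
        simp only [Set.mem_setOf_eq, Set.mem_insert_iff, Set.mem_singleton_iff]
        constructor
        · rintro ⟨hs, his⟩
          rcases jp_classify hA hB hd hl hs with ⟨D, hD, hDA, hDB, rfl⟩ | rfl | rfl |
            ⟨p, q, hpq, rfl⟩
          · exfalso
            obtain ⟨a, _, ha⟩ := his
            exact absurd ha (by simp)
          · exfalso
            rcases his with ⟨a, _, ha⟩ | hm
            · exact absurd ha (by simp)
            · rw [Set.mem_singleton_iff] at hm
              have := congrArg Fin.val (Sum.inr_injective hm)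
              simp at this
              try omega
          · exfalso
            rcases his with ⟨a, _, ha⟩ | hm
            · exact absurd ha (by simp)
            · rw [Set.mem_singleton_iff] at hm
              have := congrArg Fin.val (Sum.inr_injective hm)
              simp at this
              try omega
          · rcases his with hm | hm
            · right
              have hp : p = i := (Sum.inr_injective hm).symm
              have hq : q = (⟨i.val + 1, h2⟩ : Fin l) := by
                apply Fin.ext
                show q.val = i.val + 1
                have hpv : p.val = i.val := congrArg Fin.val hp
                omega
              rw [hp, hq]
            · left
              rw [Set.mem_singleton_iff] at hm
              have hq : q = i := (Sum.inr_injective hm).symm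
              have hp : p = (⟨i.val - 1, h1⟩ : Fin l) := by
                apply Fin.ext
                show p.val = i.val - 1
                have hqv : q.val = i.val := congrArg Fin.val hq
                omega
              rw [hp, hq]
        · rintro (rfl | rfl)
          · exact ⟨jp_max_edge hd hl (show i.val - 1 + 1 = i.val from by omega),
              Set.mem_insert_iff.mpr (Or.inr rfl)⟩
          · exact ⟨jp_max_edge hd hl (show i.val + 1 = i.val + 1 from rfl),
              Set.mem_insert _ _⟩
      · ext x
        constructor
        · rintro ⟨hx1, hx2⟩
          rcases hx1 with hm | hm
          · exfalso
            subst hm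
            rcases hx2 with hm' | hm'
            · have := congrArg Fin.val (Sum.inr_injective hm')
              simp at this
              try omega
            · rw [Set.mem_singleton_iff] at hm'
              have := congrArg Fin.val (Sum.inr_injective hm')
              simp at this
              try omega
          · exact hm
        · intro hx
          rw [Set.mem_singleton_iff] at hx
          subst hx
          exact ⟨Set.mem_insert_iff.mpr (Or.inr rfl), Set.mem_insert _ _⟩

lemma gate_mcq {V : Type} {G : SimpleGraph V} (hG : IsGate G) : ∀ v, MCQ G v := by
  induction hG with
  | cycle n hn => exact mcq_cycle n hn
  | extend G A B l hG hA hB hd hl ih =>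
      have : Nonempty _ := gate_nonempty hG
      rintro (a | i)
      · exact mcq_extend_inl hl hA hB hd (ih a)
      · exact mcq_extend_inr hl hA hB hd i
  | iso G H hG e ih => exact mcq_iso e ih

end AuxFinal
theorem stmt2 {V : Type} (G : SimpleGraph V) (hG : IsGate G) (v : V) :
    {s : Set V | IsMaxClique G s ∧ v ∈ s}.ncard = 2 ∧
    ∀ C₁ C₂ : Set V, IsMaxClique G C₁ → IsMaxClique G C₂ → v ∈ C₁ → v ∈ C₂ →
      C₁ ≠ C₂ → C₁ ∩ C₂ = {v} := by
  obtain ⟨X, Y, hXY, hset, hint⟩ := gate_mcq hG v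
  constructor
  · rw [hset]
    exact Set.ncard_pair hXY
  · intro C₁ C₂ h1 h2 hv1 hv2 hne
    have m1 : C₁ ∈ ({X, Y} : Set (Set V)) := by rw [← hset]; exact ⟨h1, hv1⟩
    have m2 : C₂ ∈ ({X, Y} : Set (Set V)) := by rw [← hset]; exact ⟨h2, hv2⟩
    rcases m1 with rfl | m1 <;> rcases m2 with rfl | m2
    · exact absurd rfl hne
    · rw [Set.mem_singleton_iff] at m2; subst m2; exact hint
    · rw [Set.mem_singleton_iff] at m1; subst m1
      rw [Set.inter_comm]; exact hint
    · rw [Set.mem_singleton_iff] at m1 m2; subst m1; subst m2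
      exact absurd rfl hne
end

section
/- Let ⟨P, T⟩ be an EPT representation of a graph G. If G contains a chordless cycle C_k with k ≥ 4 as an induced subgraph, then ⟨P, T⟩ contains a pie of size k whose paths correspond bijectively to the vertices of the cycle. -/
namespace EPTPieAux

open SimpleGraph

variable {VT : Type} {T : SimpleGraph VT}

lemma modf (k x : ℕ) (h0 : 0 < k) :
    x % k < k ∧ (x < k → x % k = x) ∧ (k ≤ x → x < 2*k → x % k + k = x) :=
  ⟨Nat.mod_lt _ h0, Nat.mod_eq_of_lt, fun h1 h2 => by
    rw [Nat.mod_eq_sub_mod h1, Nat.mod_eq_of_lt (by omega)]; omega⟩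

def idx {k : ℕ} (hk : 0 < k) (i : Fin k) (d : ℕ) : Fin k :=
  ⟨(i.val + d) % k, Nat.mod_lt _ hk⟩

lemma idx_val {k : ℕ} (hk : 0 < k) (i : Fin k) (d : ℕ) :
    (idx hk i d).val = (i.val + d) % k := rfl

lemma idx_congr {k : ℕ} (hk : 0 < k) (i : Fin k) {a b : ℕ} (h : a % k = b % k) :
    idx hk i a = idx hk i b := by
  apply Fin.ext
  show (i.val + a) % k = (i.val + b) % k
  rw [Nat.add_mod, h, ← Nat.add_mod]

lemma idx_idx {k : ℕ} (hk : 0 < k) (i : Fin k) (a b : ℕ) :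
    idx hk (idx hk i a) b = idx hk i (a + b) := by
  apply Fin.ext
  show ((i.val + a) % k + b) % k = (i.val + (a + b)) % k
  rw [Nat.mod_add_mod, Nat.add_assoc]

lemma idx_zero {k : ℕ} (hk : 0 < k) (i : Fin k) : idx hk i 0 = i := by
  apply Fin.ext
  show (i.val + 0) % k = i.val
  rw [Nat.add_zero, Nat.mod_eq_of_lt i.isLt]

lemma tree_bridge (hT : T.IsTree) {x y : VT} (h : T.Adj x y) :
    ¬ (T.deleteEdges {s(x,y)}).Reachable x y := by
  have hb : T.IsBridge s(x,y) := isAcyclic_iff_forall_adj_isBridge.mp hT.IsAcyclic h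
  rw [SimpleGraph.deleteEdges]
  exact isBridge_iff.mp hb

lemma adjD {m : Sym2 VT} {a b : VT} (h : T.Adj a b) (hne : s(a,b) ≠ m) :
    (T.deleteEdges {m}).Adj a b := by
  rw [SimpleGraph.deleteEdges_adj]
  exact ⟨h, by simpa using hne⟩

lemma reach_start {m : Sym2 VT} {u v : VT} (w : T.Walk u v) (hm : m ∉ w.edges) :
    (T.deleteEdges {m}).Reachable u v := by
  induction w with
  | nil => exact Reachable.refl _
  | cons h p ih =>
    rw [Walk.edges_cons, List.mem_cons] at hm
    push_neg at hm
    exact (adjD h hm.1.symm).reachable.trans (ih hm.2)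

lemma reach_supp {m : Sym2 VT} {u v : VT} (w : T.Walk u v) (hm : m ∉ w.edges)
    {a b : VT} (ha : a ∈ w.support) (hb : b ∈ w.support) :
    (T.deleteEdges {m}).Reachable a b := by
  have key : ∀ x, x ∈ w.support → (T.deleteEdges {m}).Reachable u x := by
    intro x hx
    rw [Walk.mem_support_iff_exists_append] at hx
    obtain ⟨q, r, rfl⟩ := hx
    refine reach_start q (fun hq => hm ?_)
    rw [Walk.edges_append, List.mem_append]; exact Or.inl hq
  exact (key a ha).symm.trans (key b hb)

lemma aux_first (hT : T.IsTree) {u v : VT} (w : T.Walk u v) :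
    w.edges.Nodup → ∀ (S : Set (Sym2 VT)), (∃ e ∈ w.edges, e ∈ S) →
    (∃ y, s(u,y) ∈ S ∧ s(u,y) ∈ w.edges) ∨
    (∃ m ∈ w.edges, m ∉ S ∧ ∀ γ δ, s(γ,δ) ∈ S → s(γ,δ) ∈ w.edges →
      ¬ (T.deleteEdges {m}).Reachable u γ) := by
  induction w with
  | nil => intro _ S hS; simp at hS
  | @cons u u' v h p ih =>
    intro hnd S hS
    rw [Walk.edges_cons] at *
    have hnd' : p.edges.Nodup := hnd.of_cons
    have hhead : s(u,u') ∉ p.edges := by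
      rw [List.nodup_cons] at hnd; exact hnd.1
    by_cases h0 : s(u,u') ∈ S
    · exact Or.inl ⟨u', h0, List.mem_cons_self⟩
    · have hS' : ∃ e ∈ p.edges, e ∈ S := by
        obtain ⟨e, he, heS⟩ := hS
        rcases List.mem_cons.mp he with rfl | he'
        · exact absurd heS h0
        · exact ⟨e, he', heS⟩
      rcases ih hnd' S hS' with ⟨y, hyS, hymem⟩ | ⟨m, hm, hmS, hsep⟩
      · refine Or.inr ⟨s(u,u'), List.mem_cons_self, h0, ?_⟩
        intro γ δ hγS hγmem hr
        have hγp : s(γ,δ) ∈ p.edges := by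
          rcases List.mem_cons.mp hγmem with heq | h'
          · exact absurd (heq ▸ hγS) h0
          · exact h'
        have hγsupp : γ ∈ p.support := p.fst_mem_support_of_mem_edges hγp
        have : (T.deleteEdges {s(u,u')}).Reachable u' γ :=
          reach_supp p hhead (Walk.start_mem_support p) hγsupp
        exact tree_bridge hT h (hr.trans this.symm)
      · refine Or.inr ⟨m, List.mem_cons_of_mem _ hm, hmS, ?_⟩
        intro γ δ hγS hγmem hr
        have hne : s(u,u') ≠ m := fun he => hhead (he ▸ hm)
        have hγp : s(γ,δ) ∈ p.edges := by
          rcases List.mem_cons.mp hγmem with heq | h'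
          · exact absurd (heq ▸ hγS) h0
          · exact h'
        exact hsep γ δ hγS hγp (((adjD h hne).reachable.symm.trans hr))

lemma aux_pair (hT : T.IsTree) {u v : VT} (w : T.Walk u v) :
    w.edges.Nodup → ∀ (A B : Set (Sym2 VT)),
    (∃ e ∈ w.edges, e ∈ B) → (∃ x₀, s(u,x₀) ∈ A) →
    (∃ c x y, s(c,x) ∈ A ∧ s(c,y) ∈ B) ∨
    (∃ m ∈ w.edges, m ∉ A ∧ m ∉ B ∧ ∃ α β, (∃ x, s(α,x) ∈ A) ∧ (∃ y, s(β,y) ∈ B) ∧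
      ¬ (T.deleteEdges {m}).Reachable α β) := by
  induction w with
  | nil => intro _ A B hB _; simp at hB
  | @cons u u' v h p ih =>
    intro hnd A B hB hu
    rw [Walk.edges_cons] at *
    have hnd' : p.edges.Nodup := hnd.of_cons
    have hhead : s(u,u') ∉ p.edges := by
      rw [List.nodup_cons] at hnd; exact hnd.1
    by_cases hB0 : s(u,u') ∈ B
    · obtain ⟨x₀, hx₀⟩ := hu
      exact Or.inl ⟨u, x₀, u', hx₀, hB0⟩
    · have hB' : ∃ e ∈ p.edges, e ∈ B := by
        obtain ⟨e, he, heB⟩ := hB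
        rcases List.mem_cons.mp he with rfl | he'
        · exact absurd heB hB0
        · exact ⟨e, he', heB⟩
      by_cases hA0 : s(u,u') ∈ A
      · rcases ih hnd' A B hB' ⟨u, by rwa [Sym2.eq_swap]⟩ with hC1 | ⟨m, hm, h1, h2, rest⟩
        · exact Or.inl hC1
        · exact Or.inr ⟨m, List.mem_cons_of_mem _ hm, h1, h2, rest⟩
      · rcases aux_first hT p hnd' (A ∪ B)
            (by obtain ⟨e, he, heB⟩ := hB'; exact ⟨e, he, Or.inr heB⟩) with
          ⟨y, hyS, hymem⟩ | ⟨m, hm, hmS, hsep⟩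
        · rcases hyS with hyA | hyB
          · rcases ih hnd' A B hB' ⟨y, hyA⟩ with hC1 | ⟨m, hm, h1, h2, rest⟩
            · exact Or.inl hC1
            · exact Or.inr ⟨m, List.mem_cons_of_mem _ hm, h1, h2, rest⟩
          · refine Or.inr ⟨s(u,u'), List.mem_cons_self, hA0, hB0, u, u', hu, ⟨y, hyB⟩, ?_⟩
            intro hr
            exact tree_bridge hT h hr
        · obtain ⟨e, he, heB⟩ := hB'
          revert he heB
          induction e using Sym2.ind with
          | _ β δ =>
            intro he heB
            have hne : s(u,u') ≠ m := fun he' => hhead (he' ▸ hm)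
            refine Or.inr ⟨m, List.mem_cons_of_mem _ hm, fun hA' => hmS (Or.inl hA'),
              fun hB'' => hmS (Or.inr hB''), u, β, hu, ⟨δ, heB⟩, ?_⟩
            intro hr
            exact hsep β δ (Or.inr heB) he ((adjD h hne).reachable.symm.trans hr)

lemma mega (hT : T.IsTree) {u v : VT} (w : T.Walk u v) :
    w.edges.Nodup → ∀ (A B : Set (Sym2 VT)),
    (∃ e ∈ w.edges, e ∈ A) → (∃ e ∈ w.edges, e ∈ B) →
    (∃ c x y, s(c,x) ∈ A ∧ s(c,y) ∈ B) ∨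
    (∃ m ∈ w.edges, m ∉ A ∧ m ∉ B ∧ ∃ α β, (∃ x, s(α,x) ∈ A) ∧ (∃ y, s(β,y) ∈ B) ∧
      ¬ (T.deleteEdges {m}).Reachable α β) := by
  induction w with
  | nil => intro _ A B hA _; simp at hA
  | @cons u u' v h p ih =>
    intro hnd A B hA hB
    rw [Walk.edges_cons] at *
    have hnd' : p.edges.Nodup := hnd.of_cons
    by_cases hA0 : s(u,u') ∈ A
    · by_cases hB0 : s(u,u') ∈ B
      · exact Or.inl ⟨u, u', u', hA0, hB0⟩
      · have hB' : ∃ e ∈ p.edges, e ∈ B := by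
          obtain ⟨e, he, heB⟩ := hB
          rcases List.mem_cons.mp he with rfl | he'
          · exact absurd heB hB0
          · exact ⟨e, he', heB⟩
        rcases aux_pair hT p hnd' A B hB' ⟨u, by rwa [Sym2.eq_swap]⟩ with
          hC1 | ⟨m, hm, h1, h2, rest⟩
        · exact Or.inl hC1
        · exact Or.inr ⟨m, List.mem_cons_of_mem _ hm, h1, h2, rest⟩
    · by_cases hB0 : s(u,u') ∈ B
      · have hA' : ∃ e ∈ p.edges, e ∈ A := by
          obtain ⟨e, he, heA⟩ := hA
          rcases List.mem_cons.mp he with rfl | he'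
          · exact absurd heA hA0
          · exact ⟨e, he', heA⟩
        rcases aux_pair hT p hnd' B A hA' ⟨u, by rwa [Sym2.eq_swap]⟩ with
          ⟨c, x, y, hx, hy⟩ | ⟨m, hm, h1, h2, α, β, hα, hβ, hr⟩
        · exact Or.inl ⟨c, y, x, hy, hx⟩
        · exact Or.inr ⟨m, List.mem_cons_of_mem _ hm, h2, h1, β, α, hβ, hα,
            fun hrr => hr hrr.symm⟩
      · have hA' : ∃ e ∈ p.edges, e ∈ A := by
          obtain ⟨e, he, heA⟩ := hA
          rcases List.mem_cons.mp he with rfl | he'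
          · exact absurd heA hA0
          · exact ⟨e, he', heA⟩
        have hB' : ∃ e ∈ p.edges, e ∈ B := by
          obtain ⟨e, he, heB⟩ := hB
          rcases List.mem_cons.mp he with rfl | he'
          · exact absurd heB hB0
          · exact ⟨e, he', heB⟩
        rcases ih hnd' A B hA' hB' with hC1 | ⟨m, hm, h1, h2, rest⟩
        · exact Or.inl hC1
        · exact Or.inr ⟨m, List.mem_cons_of_mem _ hm, h1, h2, rest⟩

lemma sep_of_ne (hT : T.IsTree) {u v : VT} (w : T.Walk u v) :
    w.IsPath → ∀ c c', c ∈ w.support → c' ∈ w.support → c ≠ c' →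
    ∃ m ∈ w.edges, ¬ (T.deleteEdges {m}).Reachable c c' := by
  induction w with
  | nil =>
    intro _ c c' hc hc' hne
    simp only [Walk.support_nil, List.mem_singleton] at hc hc'
    exact absurd (hc.trans hc'.symm) hne
  | @cons u u' v h p ih =>
    intro hp c c' hc hc' hne
    have hp' : p.IsPath := hp.of_cons
    have hu_not : u ∉ p.support := ((Walk.cons_isPath_iff h p).mp hp).2
    have hhead : s(u,u') ∉ p.edges := fun he => hu_not (p.fst_mem_support_of_mem_edges he)
    have key : ∀ z, z ∈ p.support → z ≠ u →
        ∃ m ∈ (Walk.cons h p).edges, ¬ (T.deleteEdges {m}).Reachable u z := by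
      intro z hz _
      refine ⟨s(u,u'), by rw [Walk.edges_cons]; exact List.mem_cons_self, ?_⟩
      intro hr
      have : (T.deleteEdges {s(u,u')}).Reachable u' z :=
        reach_supp p hhead (Walk.start_mem_support p) hz
      exact tree_bridge hT h (hr.trans this.symm)
    rw [Walk.support_cons, List.mem_cons] at hc hc'
    rcases hc with rfl | hc
    · rcases hc' with rfl | hc'
      · exact absurd rfl hne
      · exact key c' hc' (Ne.symm hne)
    · rcases hc' with rfl | hc'
      · obtain ⟨m, hm, hr⟩ := key c hc hne
        exact ⟨m, hm, fun hrr => hr hrr.symm⟩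
      · obtain ⟨m, hm, hr⟩ := ih hp' c c' hc hc' hne
        exact ⟨m, by rw [Walk.edges_cons]; exact List.mem_cons_of_mem _ hm, hr⟩

end EPTPieAux

open EPTPieAux in
theorem stmt8 {V : Type} (G : SimpleGraph V) (R : EPTRep G) (k : ℕ) (hk : 4 ≤ k)
    (f : SimpleGraph.cycleGraph k ↪g G) :
    ∃ (q : R.VT) (qi : Fin k → R.VT), Function.Injective qi ∧
      (∀ i, R.T.Adj q (qi i)) ∧
      ∀ i : Fin k, qi i ∈ (R.walk (f i)).support ∧ q ∈ (R.walk (f i)).support ∧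
        qi (finNext (by omega) i) ∈ (R.walk (f i)).support := by
  classical
  have hk0 : 0 < k := by omega
  have hT : R.T.IsTree := R.tree
  -- basic facts about the embedding
  have hfinj : ∀ {i j : Fin k}, i ≠ j → f i ≠ f j := fun hij he => hij (f.injective he)
  have hcycadj : ∀ i j : Fin k, i ≠ j →
      (∃ e, e ∈ (R.walk (f i)).edges ∧ e ∈ (R.walk (f j)).edges) →
      (SimpleGraph.cycleGraph k).Adj i j := fun i j hij hex =>
    f.map_rel_iff.mp ((R.adj_iff _ _ (hfinj hij)).mpr hex)
  have hadjcase : ∀ i j : Fin k, (SimpleGraph.cycleGraph k).Adj i j →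
      j = idx hk0 i 1 ∨ j = idx hk0 i (k-1) := by
    intro i j hadj
    rw [SimpleGraph.cycleGraph_adj'] at hadj
    have hi := i.isLt; have hj := j.isLt
    rcases hadj with h1 | h1
    · right
      apply Fin.ext
      rw [Fin.sub_def] at h1
      simp only [idx_val]
      have h2 := modf k (k - j.val + i.val) hk0
      have h3 := modf k (i.val + (k-1)) hk0
      simp only [Fin.val_mk] at h1
      omega
    · left
      apply Fin.ext
      rw [Fin.sub_def] at h1
      simp only [idx_val]
      have h2 := modf k (k - i.val + j.val) hk0
      have h3 := modf k (i.val + 1) hk0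
      simp only [Fin.val_mk] at h1
      omega
  have hBne : ∀ i : Fin k, ∃ e, e ∈ (R.walk (f i)).edges ∧
      e ∈ (R.walk (f (idx hk0 i 1))).edges := by
    intro i
    have hi := i.isLt
    have hne : i ≠ idx hk0 i 1 := by
      intro hEq
      have hv := congrArg Fin.val hEq
      simp only [idx_val] at hv
      have := modf k (i.val + 1) hk0
      omega
    apply (R.adj_iff _ _ (hfinj hne)).mp
    apply f.map_rel_iff.mpr
    rw [SimpleGraph.cycleGraph_adj']
    right
    rw [Fin.sub_def]
    simp only [Fin.val_mk, idx_val]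
    have h1 := modf k (i.val + 1) hk0
    have h2 := modf k (k - i.val + (i.val + 1) % k) hk0
    omega
  -- index identities
  have hidx1 : ∀ i : Fin k, idx hk0 (idx hk0 i (k-1)) 1 = i := by
    intro i
    rw [idx_idx]
    have h1 := modf k (k-1+1) hk0
    have h2 := Nat.zero_mod k
    have : (k - 1 + 1) % k = 0 % k := by omega
    rw [idx_congr hk0 i this, idx_zero]
  have hidx2 : ∀ i : Fin k, idx hk0 (idx hk0 i 1) (k-1) = i := by
    intro i
    rw [idx_idx]
    have h1 := modf k (1+(k-1)) hk0
    have h2 := Nat.zero_mod k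
    have : (1 + (k - 1)) % k = 0 % k := by omega
    rw [idx_congr hk0 i this, idx_zero]
  -- the shared-edge sets
  set Bset : Fin k → Set (Sym2 R.VT) := fun i =>
    {e | e ∈ (R.walk (f i)).edges ∧ e ∈ (R.walk (f (idx hk0 i 1))).edges} with hBset
  -- the chain argument
  have chain : ∀ (m : Sym2 R.VT) (i₀ : Fin k) (t : ℕ),
      (∀ s : ℕ, s ≤ t → m ∉ (R.walk (f (idx hk0 i₀ (1+s)))).edges) →
      ∀ a ∈ (R.walk (f (idx hk0 i₀ 1))).support,
      ∀ b ∈ (R.walk (f (idx hk0 i₀ (1+t)))).support,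
      (R.T.deleteEdges {m}).Reachable a b := by
    intro m i₀ t
    induction t with
    | zero => intro hav a ha b hb; exact reach_supp _ (hav 0 le_rfl) ha hb
    | succ t ihh =>
      intro hav a ha b hb
      obtain ⟨e, he1, he2⟩ := hBne (idx hk0 i₀ (1+t))
      revert he1 he2
      induction e using Sym2.ind with
      | _ g g' =>
        intro he1 he2
        have hg1 : g ∈ (R.walk (f (idx hk0 i₀ (1+t)))).support :=
          SimpleGraph.Walk.fst_mem_support_of_mem_edges _ he1
        have hg2 : g ∈ (R.walk (f (idx hk0 i₀ (1+(t+1))))).support := by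
          have heq : idx hk0 (idx hk0 i₀ (1+t)) 1 = idx hk0 i₀ (1+(t+1)) := by
            rw [idx_idx, show 1+t+1 = 1+(t+1) by omega]
          rw [← heq]
          exact SimpleGraph.Walk.fst_mem_support_of_mem_edges _ he2
        exact (ihh (fun s hs => hav s (by omega)) a ha g hg1).trans
          (reach_supp _ (hav (t+1) le_rfl) hg2 hb)
  -- Step 1: for each i there are an A-edge and a B-edge sharing a vertex
  have step1 : ∀ i : Fin k, ∃ c x y,
      s(c,x) ∈ Bset (idx hk0 i (k-1)) ∧ s(c,y) ∈ Bset i := by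
    intro i
    have hA : ∃ e ∈ (R.walk (f i)).edges, e ∈ Bset (idx hk0 i (k-1)) := by
      obtain ⟨e, he1, he2⟩ := hBne (idx hk0 i (k-1))
      rw [hidx1 i] at he2
      exact ⟨e, he2, ⟨he1, by rwa [hidx1 i]⟩⟩
    have hB : ∃ e ∈ (R.walk (f i)).edges, e ∈ Bset i := by
      obtain ⟨e, he1, he2⟩ := hBne i
      exact ⟨e, he1, he1, he2⟩
    rcases mega hT (R.walk (f i)) (R.isPath (f i)).isTrail.edges_nodup _ _ hA hB with
      hC1 | ⟨m, hm, hmA, hmB, α, β, ⟨xa, hxa⟩, ⟨yb, hyb⟩, hnr⟩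
    · exact hC1
    exfalso
    have havoid : ∀ j, j ≠ i → m ∉ (R.walk (f j)).edges := by
      intro j hj hmem
      rcases hadjcase i j (hcycadj i j (Ne.symm hj) ⟨m, hm, hmem⟩) with rfl | rfl
      · exact hmB ⟨hm, hmem⟩
      · exact hmA ⟨hmem, by rwa [hidx1 i]⟩
    have hβ : β ∈ (R.walk (f (idx hk0 i 1))).support :=
      SimpleGraph.Walk.fst_mem_support_of_mem_edges _ hyb.2
    have hα : α ∈ (R.walk (f (idx hk0 i (1+(k-2))))).support := by
      have heq : idx hk0 i (1+(k-2)) = idx hk0 i (k-1) := by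
        rw [show 1+(k-2) = k-1 by omega]
      rw [heq]
      exact SimpleGraph.Walk.fst_mem_support_of_mem_edges _ hxa.1
    have hre := chain m i (k-2) (fun s hs => by
      apply havoid
      intro hEq
      have hv := congrArg Fin.val hEq
      simp only [idx_val] at hv
      have := modf k (i.val + (1+s)) hk0
      have hi := i.isLt
      omega) β hβ α hα
    exact hnr hre.symm
  choose c xx yy hcx hcy using step1
  -- Step 2: consecutive meeting vertices coincide
  have step2 : ∀ i : Fin k, c (idx hk0 i 1) = c i := by
    intro i
    by_contra hne
    have hia : idx hk0 (idx hk0 i 1) (k-1) = i := hidx2 i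
    have hb_i : s(c i, yy i) ∈ Bset i := hcy i
    have ha_i1 : s(c (idx hk0 i 1), xx (idx hk0 i 1)) ∈ Bset i := by
      have := hcx (idx hk0 i 1)
      rwa [hia] at this
    have h1 : c i ∈ (R.walk (f (idx hk0 i 1))).support :=
      SimpleGraph.Walk.fst_mem_support_of_mem_edges _ hb_i.2
    have h2 : c (idx hk0 i 1) ∈ (R.walk (f (idx hk0 i 1))).support :=
      SimpleGraph.Walk.fst_mem_support_of_mem_edges _ ha_i1.2
    obtain ⟨m, hm, hnr⟩ := sep_of_ne hT (R.walk (f (idx hk0 i 1))) (R.isPath _)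
      (c i) (c (idx hk0 i 1)) h1 h2 (Ne.symm hne)
    have hmWi : m ∈ (R.walk (f i)).edges := by
      by_contra hno
      exact hnr (reach_supp (R.walk (f i)) hno
        (SimpleGraph.Walk.fst_mem_support_of_mem_edges _ hb_i.1)
        (SimpleGraph.Walk.fst_mem_support_of_mem_edges _ ha_i1.1))
    have hav : ∀ j, j ≠ i → j ≠ idx hk0 i 1 → m ∉ (R.walk (f j)).edges := by
      intro j hj hj1 hmem
      have hi := i.isLt
      rcases hadjcase i j (hcycadj i j (Ne.symm hj) ⟨m, hmWi, hmem⟩) with rfl | rfl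
      · exact hj1 rfl
      · -- j = idx i (k-1); it also shares m with W (idx i 1)
        have hne2 : idx hk0 i 1 ≠ idx hk0 i (k-1) := by
          intro hEq
          have hv := congrArg Fin.val hEq
          simp only [idx_val] at hv
          have := modf k (i.val + 1) hk0
          have := modf k (i.val + (k-1)) hk0
          omega
        rcases hadjcase (idx hk0 i 1) (idx hk0 i (k-1))
            (hcycadj _ _ hne2 ⟨m, hm, hmem⟩) with hEq | hEq
        · -- idx i (k-1) = idx (idx i 1) 1 = idx i 2
          rw [idx_idx] at hEq
          have hv := congrArg Fin.val hEq
          simp only [idx_val] at hv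
          have := modf k (i.val + (k-1)) hk0
          have := modf k (i.val + (1+1)) hk0
          omega
        · rw [hidx2 i] at hEq
          -- idx i (k-1) = i
          have hv := congrArg Fin.val hEq
          simp only [idx_val] at hv
          have := modf k (i.val + (k-1)) hk0
          omega
    have hca : c (idx hk0 i 1) ∈ (R.walk (f (idx hk0 (idx hk0 i 1) 1))).support :=
      SimpleGraph.Walk.fst_mem_support_of_mem_edges _ (hcy (idx hk0 i 1)).2
    have hcb : c i ∈ (R.walk (f (idx hk0 (idx hk0 i 1) (1+(k-3))))).support := by
      have heq : idx hk0 (idx hk0 i 1) (1+(k-3)) = idx hk0 i (k-1) := by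
        rw [idx_idx, show 1+(1+(k-3)) = k-1 by omega]
      rw [heq]
      exact SimpleGraph.Walk.fst_mem_support_of_mem_edges _ (hcx i).1
    have hre := chain m (idx hk0 i 1) (k-3) (fun s hs => by
      rw [idx_idx]
      apply hav
      · intro hEq
        have hv := congrArg Fin.val hEq
        simp only [idx_val] at hv
        have := modf k (i.val + (1+(1+s))) hk0
        have hi := i.isLt
        omega
      · intro hEq
        have hv := congrArg Fin.val hEq
        simp only [idx_val] at hv
        have := modf k (i.val + (1+(1+s))) hk0
        have := modf k (i.val + 1) hk0
        have hi := i.isLt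
        omega) _ hca _ hcb
    exact hnr hre.symm
  -- all meeting vertices are equal
  have hnat : ∀ n : ℕ, c (idx hk0 ⟨0, hk0⟩ n) = c (idx hk0 ⟨0, hk0⟩ 0) := by
    intro n
    induction n with
    | zero => rfl
    | succ n ih =>
      have heq : idx hk0 ⟨0, hk0⟩ (n+1) = idx hk0 (idx hk0 ⟨0, hk0⟩ n) 1 := by rw [idx_idx]
      rw [heq, step2, ih]
  have hceq : ∀ i : Fin k, c i = c (idx hk0 ⟨0, hk0⟩ 0) := by
    intro i
    have heq : idx hk0 ⟨0, hk0⟩ i.val = i := by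
      apply Fin.ext
      show (0 + i.val) % k = i.val
      rw [Nat.zero_add, Nat.mod_eq_of_lt i.isLt]
    rw [← heq, hnat]
  set q := c (idx hk0 ⟨0, hk0⟩ 0) with hq
  have hqa : ∀ i, s(q, xx i) ∈ Bset (idx hk0 i (k-1)) := fun i => by
    rw [← hceq i]; exact hcx i
  -- edge of W i incident to q with other endpoint xx i
  have hmemWi : ∀ i : Fin k, s(q, xx i) ∈ (R.walk (f i)).edges := by
    intro i
    have := (hqa i).2
    rwa [hidx1 i] at this
  have hinj : Function.Injective xx := by
    intro i j hxx
    by_contra hne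
    have hi := i.isLt; have hj := j.isLt
    have he : s(q, xx i) ∈ Bset (idx hk0 j (k-1)) := by rw [hxx]; exact hqa j
    have hWj : s(q, xx i) ∈ (R.walk (f j)).edges := by rw [hxx]; exact hmemWi j
    have hWi' : s(q, xx i) ∈ (R.walk (f (idx hk0 i (k-1)))).edges := (hqa i).1
    have hWj' : s(q, xx i) ∈ (R.walk (f (idx hk0 j (k-1)))).edges := he.1
    rcases hadjcase i j (hcycadj i j hne ⟨_, hmemWi i, hWj⟩) with rfl | rfl
    · -- j = idx i 1 : shared edge between W (idx i (k-1)) and W (idx i 1)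
      have hne2 : idx hk0 i (k-1) ≠ idx hk0 i 1 := by
        intro hEq
        have hv := congrArg Fin.val hEq
        simp only [idx_val] at hv
        have := modf k (i.val + 1) hk0
        have := modf k (i.val + (k-1)) hk0
        omega
      rcases hadjcase (idx hk0 i (k-1)) (idx hk0 i 1)
          (hcycadj _ _ hne2 ⟨_, hWi', hWj⟩) with hEq | hEq
      · rw [hidx1 i] at hEq
        have hv := congrArg Fin.val hEq
        simp only [idx_val] at hv
        have := modf k (i.val + 1) hk0
        omega
      · rw [idx_idx] at hEq
        have hconv : idx hk0 i (k-1+(k-1)) = idx hk0 i (k-2) := by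
          apply idx_congr
          have := modf k (k-1+(k-1)) hk0
          have := modf k (k-2) hk0
          omega
        rw [hconv] at hEq
        have hv := congrArg Fin.val hEq
        simp only [idx_val] at hv
        have := modf k (i.val + 1) hk0
        have := modf k (i.val + (k-2)) hk0
        omega
    · -- j = idx i (k-1) : shared edge between W i and W (idx (idx i (k-1)) (k-1))
      rw [idx_idx] at hWj'
      have hconv : idx hk0 i (k-1+(k-1)) = idx hk0 i (k-2) := by
        apply idx_congr
        have := modf k (k-1+(k-1)) hk0
        have := modf k (k-2) hk0
        omega
      rw [hconv] at hWj'
      have hne2 : i ≠ idx hk0 i (k-2) := by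
        intro hEq
        have hv := congrArg Fin.val hEq
        simp only [idx_val] at hv
        have := modf k (i.val + (k-2)) hk0
        omega
      rcases hadjcase i _ (hcycadj i _ hne2 ⟨_, hmemWi i, hWj'⟩) with hEq | hEq
      · have hv := congrArg Fin.val hEq
        simp only [idx_val] at hv
        have := modf k (i.val + (k-2)) hk0
        have := modf k (i.val + 1) hk0
        omega
      · have hv := congrArg Fin.val hEq
        simp only [idx_val] at hv
        have := modf k (i.val + (k-2)) hk0
        have := modf k (i.val + (k-1)) hk0
        omega
  refine ⟨q, xx, hinj, ?_, ?_⟩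
  · intro i
    exact SimpleGraph.Walk.adj_of_mem_edges _ (hmemWi i)
  · intro i
    refine ⟨SimpleGraph.Walk.snd_mem_support_of_mem_edges _ (hmemWi i),
      SimpleGraph.Walk.fst_mem_support_of_mem_edges _ (hmemWi i), ?_⟩
    have hfn : finNext (by omega : 0 < k) i = idx hk0 i 1 := rfl
    rw [hfn]
    have hmem : s(q, xx (idx hk0 i 1)) ∈ Bset i := by
      have := hqa (idx hk0 i 1)
      rwa [hidx2 i] at this
    exact SimpleGraph.Walk.snd_mem_support_of_mem_edges _ hmem.1
end

section
/- Every EPT representation ⟨P, T⟩ of a graph G can be modified to one in which no endpoint of any path P_v has degree greater than 2 in the host tree: subdividing every edge of T into three edges (and correspondingly each path), then deleting the two end vertices of each subdivided path, yields an EPT representation of G with the same maximum host-tree degree in which every path endpoint has tree-degree at most 2; moreover this modification preserves the Helly property. -/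
namespace Stmt18Aux
open SimpleGraph Sum Walk

variable {VT : Type} (T : SimpleGraph VT)

abbrev D := {p : VT × VT // T.Adj p.1 p.2}

def T' : SimpleGraph (VT ⊕ D T) where
  Adj x y :=
    match x, y with
    | inl _, inl _ => False
    | inl a, inr p => p.val.1 = a
    | inr p, inl a => p.val.1 = a
    | inr p, inr r => p.val.1 = r.val.2 ∧ p.val.2 = r.val.1
  symm := by
    constructor
    rintro (a|p) (b|r) h
    · exact h.elim
    · exact h
    · exact h
    · exact ⟨h.2.symm, h.1.symm⟩
  loopless := by
    constructor
    rintro (a|p) h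
    · exact h
    · exact p.2.ne h.1

variable {T}


lemma adj_side (p : D T) : (T' T).Adj (inl p.1.1) (inr p) := rfl
lemma adj_side' (p : D T) : (T' T).Adj (inr p) (inl p.1.1) := rfl
lemma adj_mid {a b : VT} (h : T.Adj a b) :
    (T' T).Adj (inr ⟨(a,b),h⟩) (inr ⟨(b,a),h.symm⟩) := ⟨rfl, rfl⟩


lemma adj'_elim {x y : VT ⊕ D T} (h : (T' T).Adj x y) :
    (∃ p : D T, x = inl p.1.1 ∧ y = inr p) ∨
    (∃ p : D T, y = inl p.1.1 ∧ x = inr p) ∨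
    (∃ (a b : VT) (hab : T.Adj a b), x = inr ⟨(a,b),hab⟩ ∧ y = inr ⟨(b,a),hab.symm⟩) := by
  match x, y with
  | inl a, inl b => exact h.elim
  | inl a, inr p =>
    left; exact ⟨p, by rw [show p.1.1 = a from h], rfl⟩
  | inr p, inl a =>
    right; left; exact ⟨p, by rw [show p.1.1 = a from h], rfl⟩
  | inr ⟨(a,b),hab⟩, inr ⟨(c,d),hcd⟩ =>
    right; right
    obtain ⟨h1, h2⟩ := h
    simp only at h1 h2
    subst h1; subst h2
    exact ⟨a, b, hab, rfl, rfl⟩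

/-- The full lift of a walk to the subdivision. -/
def L : {a b : VT} → T.Walk a b → (T' T).Walk (inl a) (inl b)
  | _, _, .nil => .nil
  | _, _, @Walk.cons _ _ a c _ h q =>
      Walk.cons (adj_side ⟨(a,c),h⟩)
        (Walk.cons (adj_mid h)
          (Walk.cons (adj_side' ⟨(c,a),h.symm⟩) (L q)))

def srcOf : {a b : VT} → T.Walk a b → VT ⊕ D T
  | a, _, .nil => inl a
  | _, _, @Walk.cons _ _ a c _ h _ => inr ⟨(a,c),h⟩

def tgtOf : {a b : VT} → T.Walk a b → VT ⊕ D T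
  | a, _, .nil => inl a
  | _, _, @Walk.cons _ _ a b _ h .nil => inr ⟨(b,a),h.symm⟩
  | _, _, .cons _ (.cons h' q) => tgtOf (.cons h' q)

attribute [reducible] tgtOf srcOf

/-- Lift, trimmed at the far end. -/
def Mhalf : {a b : VT} → (q : T.Walk a b) → (T' T).Walk (inl a) (tgtOf q)
  | _, _, .nil => .nil
  | _, _, @Walk.cons _ _ a b _ h .nil =>
      Walk.cons (adj_side ⟨(a,b),h⟩) (Walk.cons (adj_mid h) .nil)
  | _, _, @Walk.cons _ _ a c _ h (.cons h' q) =>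
      Walk.cons (adj_side ⟨(a,c),h⟩)
        (Walk.cons (adj_mid h)
          (Walk.cons (adj_side' ⟨(c,a),h.symm⟩) (Mhalf (.cons h' q))))

/-- Lift, trimmed at both ends. -/
def M : {a b : VT} → (q : T.Walk a b) → (T' T).Walk (srcOf q) (tgtOf q)
  | _, _, .nil => .nil
  | _, _, @Walk.cons _ _ a b _ h .nil => Walk.cons (adj_mid h) .nil
  | _, _, @Walk.cons _ _ a c _ h (.cons h' q) =>
      Walk.cons (adj_mid h)
        (Walk.cons (adj_side' ⟨(c,a),h.symm⟩) (Mhalf (.cons h' q)))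

def tailpiece : {a b : VT} → (q : T.Walk a b) → (T' T).Walk (tgtOf q) (inl b)
  | _, _, .nil => .nil
  | _, _, @Walk.cons _ _ a b _ h .nil => Walk.cons (adj_side' ⟨(b,a),h.symm⟩) .nil
  | _, _, .cons _ (.cons h' q) => tailpiece (.cons h' q)

lemma L_eq_append : ∀ {a b : VT} (q : T.Walk a b),
    L q = (Mhalf q).append (tailpiece q)
  | _, _, .nil => rfl
  | _, _, @Walk.cons _ _ _ _ _ h .nil => rfl
  | _, _, @Walk.cons _ _ a c _ h (.cons h' q) => by
      show Walk.cons _ (Walk.cons _ (Walk.cons _ (L (.cons h' q)))) = _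
      rw [L_eq_append (.cons h' q)]
      rfl


def mid {a b : VT} (h : T.Adj a b) : Sym2 (VT ⊕ D T) :=
  s(inr ⟨(a,b),h⟩, inr ⟨(b,a),h.symm⟩)

lemma mid_symm {a b : VT} (h : T.Adj a b) : mid h.symm = mid h := Sym2.eq_swap

lemma mem_support_L_inl : ∀ {a b : VT} (q : T.Walk a b) (x : VT),
    inl x ∈ (L q).support ↔ x ∈ q.support
  | _, _, .nil, x => by simp [L]
  | _, _, .cons h q, x => by
      simp [L, mem_support_L_inl q x]

lemma mem_support_L_inr : ∀ {a b : VT} (q : T.Walk a b) (p : D T),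
    inr p ∈ (L q).support ↔ s(p.1.1, p.1.2) ∈ q.edges
  | _, _, .nil, p => by simp [L]
  | _, _, @Walk.cons _ _ a c _ h q, ⟨⟨x,y⟩,hp⟩ => by
      simp only [L, Walk.support_cons, List.mem_cons, Walk.edges_cons,
        mem_support_L_inr q ⟨(x,y),hp⟩, Sym2.eq_iff, Subtype.mk.injEq, Prod.mk.injEq,
        inr.injEq, reduceCtorEq]
      tauto

lemma isPath_L : ∀ {a b : VT} (q : T.Walk a b), q.IsPath → (L q).IsPath
  | _, _, .nil, _ => by simp [L]
  | _, _, @Walk.cons _ _ a c _ h q, hq => by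
      rw [Walk.cons_isPath_iff] at hq
      obtain ⟨hq1, hq2⟩ := hq
      have hL := isPath_L q hq1
      simp only [L, Walk.cons_isPath_iff, Walk.support_cons, List.mem_cons]
      refine ⟨⟨⟨hL, ?_⟩, ?_⟩, ?_⟩
      · exact fun hc => hq2 (q.snd_mem_support_of_mem_edges ((mem_support_L_inr q _).1 hc))
      · rintro (hc | hc)
        · rw [inr.injEq, Subtype.mk.injEq, Prod.mk.injEq] at hc
          exact h.ne hc.1
        · exact hq2 (q.fst_mem_support_of_mem_edges ((mem_support_L_inr q _).1 hc))
      · rintro (hc | hc | hc)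
        · simp at hc
        · simp at hc
        · exact hq2 ((mem_support_L_inl q a).1 hc)


lemma mid_mem_L : ∀ {a b x y : VT} (q : T.Walk a b) (h' : T.Adj x y),
    s(x,y) ∈ q.edges → mid h' ∈ (L q).edges
  | _, _, _, _, .nil, h', hm => by simp at hm
  | _, _, x, y, @Walk.cons _ _ a c _ h q, h', hm => by
      simp only [Walk.edges_cons, List.mem_cons, Sym2.eq_iff] at hm
      simp only [L, Walk.edges_cons, List.mem_cons]
      rcases hm with (⟨hx, hy⟩ | ⟨hx, hy⟩) | hm
      · subst hx; subst hy
        right; left; rfl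
      · subst hx; subst hy
        right; left; exact mid_symm h
      · right; right; right; exact mid_mem_L q h' hm

lemma mid_mem_Mhalf : ∀ {a b x y : VT} (q : T.Walk a b) (h' : T.Adj x y),
    s(x,y) ∈ q.edges → mid h' ∈ (Mhalf q).edges
  | _, _, _, _, .nil, h', hm => by simp at hm
  | _, _, x, y, @Walk.cons _ _ a c _ h .nil, h', hm => by
      simp only [Walk.edges_cons, Walk.edges_nil, List.mem_cons, List.not_mem_nil, or_false,
        Sym2.eq_iff] at hm
      simp only [Mhalf, Walk.edges_cons, Walk.edges_nil, List.mem_cons]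
      rcases hm with ⟨hx, hy⟩ | ⟨hx, hy⟩
      · subst hx; subst hy; right; left; rfl
      · subst hx; subst hy; right; left; exact mid_symm h
  | _, _, x, y, @Walk.cons _ _ a c _ h (.cons h2 q), h', hm => by
      simp only [Walk.edges_cons, List.mem_cons, Sym2.eq_iff] at hm
      simp only [Mhalf, Walk.edges_cons, List.mem_cons]
      rcases hm with (⟨hx, hy⟩ | ⟨hx, hy⟩) | hm
      · subst hx; subst hy; right; left; rfl
      · subst hx; subst hy; right; left; exact mid_symm h
      · right; right; right
        have h3 := mid_mem_Mhalf (.cons h2 q) h' (by simpa using hm)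
        simpa only [Mhalf, Walk.edges_cons, List.mem_cons] using h3

lemma mid_mem_M : ∀ {a b x y : VT} (q : T.Walk a b) (h' : T.Adj x y),
    s(x,y) ∈ q.edges → mid h' ∈ (M q).edges
  | _, _, _, _, .nil, h', hm => by simp at hm
  | _, _, x, y, @Walk.cons _ _ a c _ h .nil, h', hm => by
      simp only [Walk.edges_cons, Walk.edges_nil, List.mem_cons, List.not_mem_nil, or_false,
        Sym2.eq_iff] at hm
      simp only [M, Walk.edges_cons, Walk.edges_nil, List.mem_cons]
      rcases hm with ⟨hx, hy⟩ | ⟨hx, hy⟩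
      · subst hx; subst hy; left; rfl
      · subst hx; subst hy; left; exact mid_symm h
  | _, _, x, y, @Walk.cons _ _ a c _ h (.cons h2 q), h', hm => by
      simp only [Walk.edges_cons, List.mem_cons, Sym2.eq_iff] at hm
      simp only [M, Walk.edges_cons, List.mem_cons]
      rcases hm with (⟨hx, hy⟩ | ⟨hx, hy⟩) | hm
      · subst hx; subst hy; left; rfl
      · subst hx; subst hy; left; exact mid_symm h
      · right; right
        exact mid_mem_Mhalf (.cons h2 q) h' (by simpa using hm)

lemma edges_Mhalf_subset {a b : VT} (q : T.Walk a b) {e} (he : e ∈ (Mhalf q).edges) :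
    e ∈ (L q).edges := by
  rw [L_eq_append q, Walk.edges_append]
  exact List.mem_append_left _ he

lemma edges_M_subset : ∀ {a b : VT} (q : T.Walk a b) {e}, e ∈ (M q).edges → e ∈ (L q).edges
  | _, _, .nil, e, he => by simp [M] at he
  | _, _, @Walk.cons _ _ a c _ h .nil, e, he => by
      simp only [M, Walk.edges_cons, Walk.edges_nil, List.mem_cons, List.not_mem_nil,
        or_false] at he
      simp only [L, Walk.edges_cons, List.mem_cons]
      right; left; exact he
  | _, _, @Walk.cons _ _ a c _ h (.cons h2 q), e, he => by
      simp only [M, Walk.edges_cons, List.mem_cons] at he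
      simp only [L, Walk.edges_cons, List.mem_cons]
      rcases he with he | he | he
      · right; left; exact he
      · right; right; left; exact he
      · right; right; right
        have h3 := edges_Mhalf_subset (.cons h2 q) he
        simpa only [L, Walk.edges_cons, List.mem_cons] using h3

lemma edges_L_cases : ∀ {a b : VT} (q : T.Walk a b) (e : Sym2 (VT ⊕ D T)),
    e ∈ (L q).edges → ∃ (x y : VT) (h' : T.Adj x y), s(x,y) ∈ q.edges ∧
      (e = s(inl x, inr ⟨(x,y),h'⟩) ∨ e = mid h')
  | _, _, .nil, e, he => by simp [L] at he
  | _, _, @Walk.cons _ _ a c _ h q, e, he => by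
      simp only [L, Walk.edges_cons, List.mem_cons] at he
      rcases he with he | he | he | he
      · exact ⟨a, c, h, by simp, Or.inl he⟩
      · exact ⟨a, c, h, by simp, Or.inr he⟩
      · refine ⟨c, a, h.symm, by simp [Sym2.eq_swap], Or.inl ?_⟩
        rw [he]; exact Sym2.eq_swap
      · obtain ⟨x, y, h', hm, hc⟩ := edges_L_cases q e he
        exact ⟨x, y, h', by simp [hm], hc⟩

lemma common_of_L {a1 b1 a2 b2 : VT} {q1 : T.Walk a1 b1} {q2 : T.Walk a2 b2}
    {e : Sym2 (VT ⊕ D T)} (h1 : e ∈ (L q1).edges) (h2 : e ∈ (L q2).edges) :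
    ∃ x y, s(x,y) ∈ q1.edges ∧ s(x,y) ∈ q2.edges := by
  obtain ⟨x, y, h', hm, hc⟩ := edges_L_cases q1 e h1
  obtain ⟨x', y', h'', hm', hc'⟩ := edges_L_cases q2 e h2
  refine ⟨x, y, hm, ?_⟩
  rcases hc with rfl | rfl <;> rcases hc' with he | he <;>
      simp only [mid, Sym2.eq_iff, inl.injEq, inr.injEq, Subtype.mk.injEq, Prod.mk.injEq,
        reduceCtorEq, false_and, and_false, or_false, false_or, or_self] at he <;>
    · have h12 : (x = x' ∧ y = y') ∨ (x = y' ∧ y = x') := by tauto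
      rcases h12 with ⟨rfl, rfl⟩ | ⟨rfl, rfl⟩
      · exact hm'
      · exact Sym2.eq_swap ▸ hm'


lemma support_Mhalf_cons {a c b : VT} (h : T.Adj a c) (q : T.Walk c b) :
    (Mhalf (.cons h q)).support = inl a :: (M (.cons h q)).support := by
  cases q <;> rfl

lemma isPath_Mhalf {a b : VT} {q : T.Walk a b} (hq : q.IsPath) : (Mhalf q).IsPath := by
  have h1 := isPath_L q hq
  rw [L_eq_append q] at h1
  exact h1.of_append_left

lemma isPath_M {a b : VT} (q : T.Walk a b) (hq : q.IsPath) : (M q).IsPath := by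
  cases q with
  | nil => simp [M]
  | cons h q' =>
      have h2 := isPath_Mhalf hq
      rw [Walk.isPath_def] at h2 ⊢
      rw [support_Mhalf_cons] at h2
      exact (List.nodup_cons.mp h2).2

lemma srcOf_spec {a b : VT} (q : T.Walk a b) (h : ¬q.Nil) : ∃ p : D T, srcOf q = inr p := by
  cases q with
  | nil => simp at h
  | cons h' q' => exact ⟨_, rfl⟩

lemma tgtOf_spec : ∀ {a b : VT} (q : T.Walk a b), ¬q.Nil → ∃ p : D T, tgtOf q = inr p
  | _, _, .nil, h => by simp at h
  | _, _, @Walk.cons _ _ a c _ h' .nil, _ => ⟨_, rfl⟩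
  | _, _, @Walk.cons _ _ a c _ h' (.cons h2 q), _ =>
      tgtOf_spec (.cons h2 q) (by simp)

lemma connected' (hT : T.Connected) : (T' T).Connected := by
  have base : ∀ a b : VT, (T' T).Reachable (inl a) (inl b) := fun a b =>
    (hT a b).elim fun w => ⟨L w⟩
  rw [connected_iff]
  refine ⟨?_, ⟨inl hT.nonempty.some⟩⟩
  rintro (a | p) (b | r)
  · exact base a b
  · exact (base a r.1.1).trans (adj_side r).reachable
  · exact ((base p.1.1 b).symm.trans (adj_side p).reachable).symm
  · exact ((adj_side' p).reachable.trans (base p.1.1 r.1.1)).trans (adj_side r).reachable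

lemma lift_path : ∀ (n : ℕ) {a b : VT} (p : (T' T).Walk (inl a) (inl b)),
    p.length = n → p.IsPath → ∃ q : T.Walk a b, q.IsPath ∧ p = L q := by
  intro n
  induction n using Nat.strong_induction_on with
  | _ n ih =>
    intro a b p hlen hp
    cases p with
    | nil => exact ⟨.nil, by simp, rfl⟩
    | @cons _ z _ h1 p1 =>
      rcases adj'_elim h1 with ⟨p0, hx, hz⟩ | ⟨p0, hz, hx⟩ | ⟨x, y, hxy, hx, hz⟩
      · -- z = inr p0, p0.1.1 = a
        obtain ⟨⟨a0, c⟩, hac⟩ := p0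
        simp only [inl.injEq] at hx
        subst hx; subst hz
        cases p1 with
        | @cons _ z2 _ h2 p2 =>
          rcases adj'_elim h2 with ⟨p0', hx', hz'⟩ | ⟨p0', hz', hx'⟩ | ⟨x', y', hxy', hx', hz'⟩
          · exact absurd hx' (by simp)
          · -- z2 = inl p0'.1.1, and inr ⟨(a,c),hac⟩ = inr p0'
            rw [inr.injEq] at hx'
            subst hx'
            subst hz'
            -- z2 = inl a : support duplication
            exfalso
            rw [Walk.cons_isPath_iff] at hp
            exact hp.2 (by simp [Walk.support_cons])
          · -- middle step
            rw [inr.injEq, Subtype.mk.injEq, Prod.mk.injEq] at hx'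
            obtain ⟨rfl, rfl⟩ := hx'
            subst hz'
            cases p2 with
            | @cons _ z3 _ h3 p3 =>
              rcases adj'_elim h3 with ⟨p0'', hx'', hz''⟩ | ⟨p0'', hz'', hx''⟩ |
                ⟨x'', y'', hxy'', hx'', hz''⟩
              · exact absurd hx'' (by simp)
              · rw [inr.injEq] at hx''
                subst hx''
                subst hz''
                -- z3 = inl y' : proceed
                have hp3 : p3.IsPath := hp.of_cons.of_cons.of_cons
                have hlt : p3.length < n := by
                  simp only [Walk.length_cons] at hlen; omega
                obtain ⟨q3, hq3, rfl⟩ := ih p3.length hlt p3 rfl hp3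
                refine ⟨Walk.cons hxy' q3, ?_, rfl⟩
                rw [Walk.cons_isPath_iff]
                refine ⟨hq3, fun hmem => ?_⟩
                rw [Walk.cons_isPath_iff, Walk.cons_isPath_iff, Walk.cons_isPath_iff] at hp
                exact hp.2 (by
                  simp only [Walk.support_cons, List.mem_cons]
                  exact Or.inr (Or.inr ((mem_support_L_inl q3 _).2 hmem)))
              · -- z3 = inr ⟨(y'',x'')⟩ with inr ⟨(y',x')⟩ = inr ⟨(x'',y'')⟩ : duplication
                rw [inr.injEq, Subtype.mk.injEq, Prod.mk.injEq] at hx''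
                obtain ⟨rfl, rfl⟩ := hx''
                subst hz''
                exfalso
                rw [Walk.cons_isPath_iff, Walk.cons_isPath_iff] at hp
                exact hp.1.2 (by simp [Walk.support_cons])
      · exact absurd hx (by simp)
      · exact absurd hx (by simp)


lemma acyclic' (hT : T.IsAcyclic) : (T' T).IsAcyclic := by
  classical
  intro v c hc
  rcases Classical.em (∃ x : VT, inl x ∈ c.support) with hs | hs
  · obtain ⟨x, hx⟩ := hs
    have hc' := hc.rotate hx
    have hlen := hc'.three_le_length
    revert hc' hlen
    generalize c.rotate _ hx = c2
    intro hc' hlen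
    cases c2 with
    | nil => simp at hlen
    | @cons _ z _ h1 p =>
      rcases adj'_elim h1 with ⟨p0, hx1, hz⟩ | ⟨p0, hz, hx1⟩ | ⟨xx, yy, hxy, hx1, hz⟩
      · obtain ⟨⟨x0, c1⟩, hxc⟩ := p0
        simp only [inl.injEq] at hx1
        subst hx1; subst hz
        rw [Walk.cons_isCycle_iff] at hc'
        obtain ⟨hp, hfe⟩ := hc'
        cases p with
        | @cons _ z2 _ h2 p2 =>
          rcases adj'_elim h2 with ⟨q0, hq1, hq2⟩ | ⟨q0, hq2, hq1⟩ | ⟨x2, y2, hxy2, hq1, hq2⟩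
          · exact absurd hq1 (by simp)
          · rw [inr.injEq] at hq1
            subst hq1; subst hq2
            have hp2 := Walk.isPath_iff_eq_nil.1 hp.of_cons
            subst hp2
            simp at hlen
          · rw [inr.injEq, Subtype.mk.injEq, Prod.mk.injEq] at hq1
            obtain ⟨rfl, rfl⟩ := hq1
            subst hq2
            cases p2 with
            | @cons _ z3 _ h3 p3 =>
              rcases adj'_elim h3 with ⟨q0', hq1', hq2'⟩ | ⟨q0', hq2', hq1'⟩ |
                ⟨x3, y3, hxy3, hq1', hq2'⟩
              · exact absurd hq1' (by simp)
              · rw [inr.injEq] at hq1'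
                subst hq1'; subst hq2'
                obtain ⟨q, hq, rfl⟩ := lift_path p3.length p3 rfl hp.of_cons.of_cons
                refine hT (Walk.cons hxc q) ?_
                rw [SimpleGraph.Walk.cons_isCycle_iff]
                refine ⟨hq, fun hmem => ?_⟩
                have hmid := mid_mem_L q hxc hmem
                have hnodup := hp.isTrail.edges_nodup
                rw [Walk.edges_cons, List.nodup_cons] at hnodup
                exact hnodup.1 (by
                  rw [Walk.edges_cons]
                  exact List.mem_cons_of_mem _ hmid)
              · rw [inr.injEq, Subtype.mk.injEq, Prod.mk.injEq] at hq1'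
                obtain ⟨rfl, rfl⟩ := hq1'
                subst hq2'
                rw [Walk.cons_isPath_iff] at hp
                exact absurd (by
                  rw [Walk.support_cons]
                  exact List.mem_cons_of_mem _ p3.start_mem_support) hp.2
      · exact absurd hx1 (by simp)
      · exact absurd hx1 (by simp)
  · push_neg at hs
    have hlen := hc.three_le_length
    rcases v with x | pv
    · exact hs x c.start_mem_support
    · cases c with
      | nil => simp at hlen
      | @cons _ z1 _ h1 p =>
        obtain ⟨⟨a, b⟩, hab⟩ := pv
        rcases adj'_elim h1 with ⟨p0, h01, h02⟩ | ⟨p0, h02, h01⟩ | ⟨x2, y2, hxy2, h01, h02⟩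
        · exact absurd h01 (by simp)
        · subst h02
          exact hs p0.1.1 (by
            rw [Walk.support_cons]
            exact List.mem_cons_of_mem _ p.start_mem_support)
        · rw [inr.injEq, Subtype.mk.injEq, Prod.mk.injEq] at h01
          obtain ⟨rfl, rfl⟩ := h01
          subst h02
          cases p with
          | nil => simp at hlen
          | @cons _ z2 _ h2 p2 =>
            rcases adj'_elim h2 with ⟨q0, hq1, hq2⟩ | ⟨q0, hq2, hq1⟩ | ⟨x3, y3, hxy3, hq1, hq2⟩
            · exact absurd hq1 (by simp)
            · subst hq2
              exact hs q0.1.1 (by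
                rw [Walk.support_cons, Walk.support_cons]
                exact List.mem_cons_of_mem _ (List.mem_cons_of_mem _ p2.start_mem_support))
            · rw [inr.injEq, Subtype.mk.injEq, Prod.mk.injEq] at hq1
              obtain ⟨rfl, rfl⟩ := hq1
              subst hq2
              have hnodup := hc.isTrail.edges_nodup
              rw [Walk.edges_cons, Walk.edges_cons, List.nodup_cons] at hnodup
              refine absurd ?_ hnodup.1
              rw [List.mem_cons]
              left
              exact Sym2.eq_swap

lemma isTree' (hT : T.IsTree) : (T' T).IsTree :=
  ⟨connected' hT.isConnected, acyclic' hT.IsAcyclic⟩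


lemma nbhd_inr (p : D T) :
    (T' T).neighborSet (inr p) = {inl p.1.1, inr ⟨(p.1.2, p.1.1), p.2.symm⟩} := by
  ext z
  simp only [mem_neighborSet, Set.mem_insert_iff, Set.mem_singleton_iff]
  constructor
  · intro hz
    rcases adj'_elim hz with ⟨p0, h1, h2⟩ | ⟨p0, h2, h1⟩ | ⟨a, b, hab, h1, h2⟩
    · exact absurd h1 (by simp)
    · rw [inr.injEq] at h1
      subst h1
      left; exact h2
    · rw [inr.injEq] at h1
      subst h1
      right; exact h2
  · rintro (rfl | rfl)
    · exact adj_side' p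
    · exact ⟨rfl, rfl⟩

lemma ncard_nbhd_inr (p : D T) : ((T' T).neighborSet (inr p)).ncard = 2 := by
  rw [nbhd_inr, Set.ncard_pair (by simp)]

lemma ncard_nbhd_inl (a : VT) :
    ((T' T).neighborSet (inl a)).ncard = (T.neighborSet a).ncard := by
  have hshape : ∀ z, (T' T).Adj (inl a) z → ∃ y, ∃ hy : T.Adj a y, z = inr ⟨(a,y),hy⟩ := by
    intro z hz
    rcases adj'_elim hz with ⟨p0, h1, h2⟩ | ⟨p0, h2, h1⟩ | ⟨x, y, hxy, h1, h2⟩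
    · obtain ⟨⟨u, w⟩, huw⟩ := p0
      simp only [inl.injEq] at h1
      subst h1
      exact ⟨w, huw, h2⟩
    · exact absurd h1 (by simp)
    · exact absurd h1 (by simp)
  have himg : (Sum.elim id (fun p : D T => p.1.2)) '' ((T' T).neighborSet (inl a))
      = T.neighborSet a := by
    ext b
    simp only [Set.mem_image, mem_neighborSet]
    constructor
    · rintro ⟨z, hz, hzb⟩
      obtain ⟨y, hy, rfl⟩ := hshape z hz
      simp only [Sum.elim_inr] at hzb
      exact hzb ▸ hy
    · intro hb
      exact ⟨inr ⟨(a,b),hb⟩, rfl, rfl⟩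
  have hinj : Set.InjOn (Sum.elim id (fun p : D T => p.1.2)) ((T' T).neighborSet (inl a)) := by
    intro z1 hz1 z2 hz2 he
    obtain ⟨y1, hy1, rfl⟩ := hshape z1 hz1
    obtain ⟨y2, hy2, rfl⟩ := hshape z2 hz2
    simp only [Sum.elim_inr] at he
    subst he
    rfl
  rw [← himg, Set.ncard_image_of_injOn hinj]

variable {V : Type} {G : SimpleGraph V}

open scoped Classical in
noncomputable def newRep (R : EPTRep G) (d0 : D R.T) : EPTRep G where
  VT := R.VT ⊕ D R.T
  T := T' R.T
  tree := isTree' R.tree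
  src v := if (R.walk v).Nil then inr d0 else srcOf (R.walk v)
  tgt v := if (R.walk v).Nil then inr d0 else tgtOf (R.walk v)
  walk v :=
    if h : (R.walk v).Nil then
      (Walk.nil (u := inr d0)).copy (if_pos h).symm (if_pos h).symm
    else
      (M (R.walk v)).copy (if_neg h).symm (if_neg h).symm
  isPath v := by
    by_cases h : (R.walk v).Nil
    · rw [dif_pos h]
      simp
    · rw [dif_neg h, Walk.isPath_copy]
      exact isPath_M _ (R.isPath v)
  adj_iff v w hvw := by
    rw [R.adj_iff v w hvw]
    constructor
    · rintro ⟨e, he1, he2⟩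
      induction e using Sym2.ind with
      | _ x y =>
        have hadj : R.T.Adj x y := (R.walk v).adj_of_mem_edges he1
        have hnn : ∀ u : V, s(x,y) ∈ (R.walk u).edges → ¬(R.walk u).Nil := by
          intro u hu hn
          rw [Walk.nil_iff_length_eq] at hn
          exact List.ne_nil_of_mem hu
            (List.length_eq_zero_iff.mp (by rw [Walk.length_edges]; exact hn))
        refine ⟨mid hadj, ?_, ?_⟩
        · rw [dif_neg (hnn v he1), Walk.edges_copy]
          exact mid_mem_M _ hadj he1
        · rw [dif_neg (hnn w he2), Walk.edges_copy]
          exact mid_mem_M _ hadj he2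
    · rintro ⟨e, he1, he2⟩
      have hnv : ¬(R.walk v).Nil := by
        intro hn
        rw [dif_pos hn, Walk.edges_copy] at he1
        simp at he1
      have hnw : ¬(R.walk w).Nil := by
        intro hn
        rw [dif_pos hn, Walk.edges_copy] at he2
        simp at he2
      rw [dif_neg hnv, Walk.edges_copy] at he1
      rw [dif_neg hnw, Walk.edges_copy] at he2
      obtain ⟨x, y, m1, m2⟩ := common_of_L (edges_M_subset _ he1) (edges_M_subset _ he2)
      exact ⟨s(x,y), m1, m2⟩

lemma newRep_edges_not_nil (R : EPTRep G) (d0 : D R.T) {v : V} (h : ¬(R.walk v).Nil) :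
    (newRep R d0).edges v = {e | e ∈ (M (R.walk v)).edges} := by
  ext e
  simp only [EPTRep.edges, Set.mem_setOf_eq, newRep, dif_neg h, Walk.edges_copy]
  exact Iff.rfl

end Stmt18Aux

open Stmt18Aux Sum SimpleGraph in
theorem stmt18 {V : Type} (G : SimpleGraph V) (R : EPTRep G) :
    ∃ R' : EPTRep G,
      (∀ h : ℕ, R.maxDegLE h → R'.maxDegLE h) ∧
      (∀ v : V, (R'.T.neighborSet (R'.src v)).ncard ≤ 2 ∧
                (R'.T.neighborSet (R'.tgt v)).ncard ≤ 2) ∧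
      (R.Helly → R'.Helly) := by
  classical
  by_cases hdeg : ∀ x : R.VT, (R.T.neighborSet x).ncard ≤ 2
  · exact ⟨R, fun h hh => hh, fun v => ⟨hdeg _, hdeg _⟩, fun h => h⟩
  · push_neg at hdeg
    obtain ⟨x0, hx0⟩ := hdeg
    obtain ⟨y0, hy0⟩ : (R.T.neighborSet x0).Nonempty :=
      Set.nonempty_of_ncard_ne_zero (by omega)
    refine ⟨newRep R ⟨(x0, y0), hy0⟩, ?_, ?_, ?_⟩
    · rintro h hh (x | p)
      · show ((T' R.T).neighborSet (inl x)).ncard ≤ h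
        rw [ncard_nbhd_inl]
        exact hh x
      · show ((T' R.T).neighborSet (inr p)).ncard ≤ h
        rw [ncard_nbhd_inr]
        have := hh x0
        omega
    · intro v
      constructor
      · show ((T' R.T).neighborSet
          (if (R.walk v).Nil then inr ⟨(x0,y0),hy0⟩ else srcOf (R.walk v))).ncard ≤ 2
        by_cases h : (R.walk v).Nil
        · rw [if_pos h, ncard_nbhd_inr]
        · rw [if_neg h]
          obtain ⟨p, hp⟩ := srcOf_spec _ h
          rw [hp, ncard_nbhd_inr]
      · show ((T' R.T).neighborSet
          (if (R.walk v).Nil then inr ⟨(x0,y0),hy0⟩ else tgtOf (R.walk v))).ncard ≤ 2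
        by_cases h : (R.walk v).Nil
        · rw [if_pos h, ncard_nbhd_inr]
        · rw [if_neg h]
          obtain ⟨p, hp⟩ := tgtOf_spec _ h
          rw [hp, ncard_nbhd_inr]
    · intro hH S hSne hpair
      have hnonnil : ∀ v ∈ S, ¬(R.walk v).Nil := by
        intro v hv hn
        obtain ⟨e, he, -⟩ := hpair v hv v hv
        have : (newRep R ⟨(x0,y0),hy0⟩).edges v = ∅ := by
          ext e'
          simp only [EPTRep.edges, Set.mem_setOf_eq, newRep, dif_pos hn, Walk.edges_copy]
          exact ⟨fun h => (List.not_mem_nil (show e' ∈ ([] : List _) from h)).elim, fun h => h.elim⟩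
        rw [this] at he
        exact he
      have hpair' : ∀ u ∈ S, ∀ v ∈ S, (R.edges u ∩ R.edges v).Nonempty := by
        intro u hu v hv
        obtain ⟨e, heu, hev⟩ := hpair u hu v hv
        rw [newRep_edges_not_nil _ _ (hnonnil u hu)] at heu
        rw [newRep_edges_not_nil _ _ (hnonnil v hv)] at hev
        obtain ⟨x, y, m1, m2⟩ := common_of_L (edges_M_subset _ heu) (edges_M_subset _ hev)
        exact ⟨s(x,y), m1, m2⟩
      obtain ⟨e, he⟩ := hH S hSne hpair'
      simp only [Set.mem_iInter] at he
      induction e using Sym2.ind with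
      | _ x y =>
        obtain ⟨v0, hv0⟩ := hSne
        have hadj := (R.walk v0).adj_of_mem_edges (he v0 hv0)
        refine ⟨mid hadj, ?_⟩
        refine Set.mem_iInter₂.2 ?_
        intro v hv
        rw [newRep_edges_not_nil _ _ (hnonnil v hv)]
        exact mid_mem_M _ hadj (he v hv)
end
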